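/- arXiv:2501.15422 — 8 statements merged into one kernel-verified Lean document; each statement's English description precedes it below -/
import Mathlib

section
/- For n ≥ 3, the single-peaked domain with respect to the ordering o1, o2, ..., on fails the top-two condition: taking O' = {o1, o2, o3}, both o1 and o3 can be most-preferred within O', but no single-peaked preference ranks o1 first and o3 second (or o3 first and o1 second) within O'. -/
def top {α : Type*} (P : α → α → Prop) (O' : Set α) (a : α) : Prop :=
  a ∈ O' ∧ ∀ c ∈ O', c ≠ a → P a c

def topTwo {α : Type*} (D : Set (α → α → Prop)) : Prop :=
  ∀ O' : Set α, O'.Nonempty → ∀ a b : α, a ∈ O' → b ∈ O' → a ≠ b →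
    (∃ P ∈ D, top P O' a) → (∃ P ∈ D, top P O' b) →
      ∃ P0 ∈ D, top P0 O' a ∧ top P0 (O' \ {a}) b

/-- Single-peaked w.r.t. the ordering o1 → ... → on (objects are `Fin n`, o_k = k-1):
if p is the most-preferred object, the preference increases up to p and decreases after p. -/
def singlePeaked {n : ℕ} (P : Fin n → Fin n → Prop) : Prop :=
  IsStrictTotalOrder (Fin n) P ∧
    ∀ p : Fin n, top P Set.univ p →
      ∀ k : ℕ, ∀ hk : k + 1 < n,
        (k + 1 ≤ (p : ℕ) → P ⟨k + 1, hk⟩ ⟨k, by omega⟩) ∧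
        ((p : ℕ) ≤ k → P ⟨k, by omega⟩ ⟨k + 1, hk⟩)

/-- The single-peaked domain. -/
def SPDomain (n : ℕ) : Set (Fin n → Fin n → Prop) := {P | singlePeaked P}

/-- Auxiliary valuation with peak at 2. -/
def fTwo (n : ℕ) (a : Fin n) : ℕ := if a.val ≤ 2 then 2 - a.val else a.val

lemma exists_peak {n : ℕ} [NeZero n] (P : Fin n → Fin n → Prop)
    (h : IsStrictTotalOrder (Fin n) P) : ∃ p : Fin n, top P Set.univ p := by
  haveI := h
  obtain ⟨m, -, hm⟩ := (Finite.wellFounded_of_trans_of_irrefl P).has_min Set.univ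
    ⟨0, Set.mem_univ 0⟩
  refine ⟨m, Set.mem_univ m, fun c _ hc => ?_⟩
  rcases trichotomous_of P m c with h1 | h1 | h1
  · exact h1
  · exact absurd h1.symm hc
  · exact absurd h1 (hm c (Set.mem_univ c))

theorem stmt5 {n : ℕ} [NeZero n] (hn : 3 ≤ n) :
    (∃ P ∈ SPDomain n, top P ({0, 1, 2} : Set (Fin n)) 0) ∧
    (∃ P ∈ SPDomain n, top P ({0, 1, 2} : Set (Fin n)) 2) ∧
    (∀ P ∈ SPDomain n, top P ({0, 1, 2} : Set (Fin n)) 0 →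
      ¬ top P (({0, 1, 2} : Set (Fin n)) \ {0}) 2) ∧
    (∀ P ∈ SPDomain n, top P ({0, 1, 2} : Set (Fin n)) 2 →
      ¬ top P (({0, 1, 2} : Set (Fin n)) \ {2}) 0) ∧
    ¬ topTwo (SPDomain n) := by
  have h0v : (0 : Fin n).val = 0 := by show 0 % n = 0; exact Nat.zero_mod n
  have h1v : (1 : Fin n).val = 1 := by
    show 1 % n = 1; exact Nat.mod_eq_of_lt (by omega)
  have h2v : (2 : Fin n).val = 2 := by
    show 2 % n = 2; exact Nat.mod_eq_of_lt (by omega)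
  have h01 : (0 : Fin n) ≠ 1 := Fin.ne_of_val_ne (by rw [h0v, h1v]; omega)
  have h02 : (0 : Fin n) ≠ 2 := Fin.ne_of_val_ne (by rw [h0v, h2v]; omega)
  have h12 : (1 : Fin n) ≠ 2 := Fin.ne_of_val_ne (by rw [h1v, h2v]; omega)
  have e0 : (⟨0, by omega⟩ : Fin n) = 0 := Fin.ext (by rw [h0v])
  have e1 : (⟨1, by omega⟩ : Fin n) = 1 := Fin.ext (by rw [h1v])
  have e2 : (⟨2, by omega⟩ : Fin n) = 2 := Fin.ext (by rw [h2v])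
  -- the "prefer smaller" preference
  have sp1 : singlePeaked (fun a b : Fin n => a < b) := by
    constructor
    · exact inferInstanceAs (IsStrictTotalOrder (Fin n) (· < ·))
    · intro p hp k hk
      have hp0 : (p : ℕ) = 0 := by
        by_contra hne
        have h0p : (0 : Fin n) ≠ p := fun h => hne (by rw [← h, h0v])
        have h' : p < 0 := hp.2 0 (Set.mem_univ 0) h0p
        rw [Fin.lt_def, h0v] at h'
        omega
      exact ⟨fun hle => by omega, fun _ => Fin.mk_lt_mk.mpr (by omega)⟩
  -- the preference with peak at 2
  have finj : Function.Injective (fTwo n) := by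
    intro a b hab
    apply Fin.ext
    unfold fTwo at hab
    split_ifs at hab <;> omega
  have sp2 : singlePeaked (fun a b : Fin n => fTwo n a < fTwo n b) := by
    constructor
    · refine { trichotomous := ?_, irrefl := ?_, trans := ?_ }
      · intro a b
        rcases lt_trichotomy (fTwo n a) (fTwo n b) with h | h | h
        · exact fun h1 _ => absurd h h1
        · exact fun _ _ => finj h
        · exact fun _ h2 => absurd h h2
      · exact fun a => lt_irrefl _
      · exact fun a b c => Nat.lt_trans
    · intro p hp k hk
      have hf2 : fTwo n 2 = 0 := by unfold fTwo; rw [h2v]; norm_num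
      have hp2 : (p : ℕ) = 2 := by
        by_contra hne
        have h2p : (2 : Fin n) ≠ p := fun h => hne (by rw [← h, h2v])
        have h' : fTwo n p < fTwo n 2 := hp.2 2 (Set.mem_univ 2) h2p
        rw [hf2] at h'
        omega
      constructor
      · intro hle
        show fTwo n ⟨k + 1, hk⟩ < fTwo n ⟨k, by omega⟩
        unfold fTwo
        simp only
        split_ifs <;> omega
      · intro hge
        show fTwo n ⟨k, by omega⟩ < fTwo n ⟨k + 1, hk⟩
        unfold fTwo
        simp only
        split_ifs <;> omega
  have c1 : ∃ P ∈ SPDomain n, top P ({0, 1, 2} : Set (Fin n)) 0 := by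
    refine ⟨_, sp1, by simp, fun c hc hcne => ?_⟩
    have : c.val ≠ 0 := fun h => hcne (Fin.ext (by rw [h, h0v]))
    show (0 : Fin n) < c
    rw [Fin.lt_def, h0v]
    omega
  have c2 : ∃ P ∈ SPDomain n, top P ({0, 1, 2} : Set (Fin n)) 2 := by
    refine ⟨_, sp2, by simp, fun c hc hcne => ?_⟩
    simp only [Set.mem_insert_iff, Set.mem_singleton_iff] at hc
    rcases hc with rfl | rfl | rfl
    · show fTwo n 2 < fTwo n 0
      unfold fTwo; rw [h2v, h0v]; norm_num
    · show fTwo n 2 < fTwo n 1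
      unfold fTwo; rw [h2v, h1v]; norm_num
    · exact absurd rfl hcne
  have c3 : ∀ P ∈ SPDomain n, top P ({0, 1, 2} : Set (Fin n)) 0 →
      ¬ top P (({0, 1, 2} : Set (Fin n)) \ {0}) 2 := by
    intro P hP htop htop2
    obtain ⟨hSTO, hpk⟩ := hP
    haveI := hSTO
    have asym : ∀ a b : Fin n, P a b → ¬ P b a := fun a b ha hb =>
      irrefl_of P a (trans_of P ha hb)
    obtain ⟨p, hpTop⟩ := exists_peak P hSTO
    have hP01 : P 0 1 := htop.2 1 (by simp) h01.symm
    have hpk0 := hpk p hpTop 0 (by omega)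
    have hp0 : (p : ℕ) = 0 := by
      by_contra h
      have h1 := hpk0.1 (by omega)
      rw [e1, e0] at h1
      exact asym _ _ hP01 h1
    have hpk1 := hpk p hpTop 1 (by omega)
    have hP12 := hpk1.2 (by omega)
    rw [e1, e2] at hP12
    exact asym _ _ hP12 (htop2.2 1 ⟨by simp, by simpa using h01.symm⟩ h12)
  have c4 : ∀ P ∈ SPDomain n, top P ({0, 1, 2} : Set (Fin n)) 2 →
      ¬ top P (({0, 1, 2} : Set (Fin n)) \ {2}) 0 := by
    intro P hP htop htop2
    obtain ⟨hSTO, hpk⟩ := hP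
    haveI := hSTO
    have asym : ∀ a b : Fin n, P a b → ¬ P b a := fun a b ha hb =>
      irrefl_of P a (trans_of P ha hb)
    obtain ⟨p, hpTop⟩ := exists_peak P hSTO
    have hP21 : P 2 1 := htop.2 1 (by simp) h12
    have hpk1 := hpk p hpTop 1 (by omega)
    have hp2 : 2 ≤ (p : ℕ) := by
      by_contra h
      have h1 := hpk1.2 (by omega)
      rw [e1, e2] at h1
      exact asym _ _ hP21 h1
    have hpk0 := hpk p hpTop 0 (by omega)
    have hP10 := hpk0.1 (by omega)
    rw [e1, e0] at hP10
    exact asym _ _ hP10 (htop2.2 1 ⟨by simp, by simpa using h12⟩ h01.symm)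
  refine ⟨c1, c2, c3, c4, fun htt => ?_⟩
  obtain ⟨P0, hP0, hA, hB⟩ := htt ({0, 1, 2} : Set (Fin n)) ⟨0, by simp⟩ 0 2
    (by simp) (by simp) h02 c1 c2
  exact c3 P0 hP0 hA hB
end

section
/- For n ≥ 3 and any p ∈ {1, ..., n-1}, the single-peaked domain with two adjacent peaks D^{SP-2}(p), consisting of single-peaked preferences whose most-preferred object is o_p or o_{p+1}, satisfies the top-two condition. -/
/-- The single-peaked domain with the two adjacent peaks p and p+1. -/
def SP2Domain (n : ℕ) (p : Fin n) : Set (Fin n → Fin n → Prop) :=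
  {P | singlePeaked P ∧ ∃ t : Fin n, top P Set.univ t ∧ ((t : ℕ) = (p : ℕ) ∨ (t : ℕ) = (p : ℕ) + 1)}

/-! ### Auxiliary machinery -/

/-- A utility function on positions: `a` gets value `3n` (best), `b` gets `2n` (second),
positions strictly between `a` and the split point `p/p+1` on `a`'s side get values above `3n`,
positions strictly between the split and `b` on `b`'s side get values in `(2n, 3n)`,
positions beyond `a` get values below `n`, positions beyond `b` get values in `(n, 2n)`. -/
def gfun (n p a b x : ℕ) : ℕ :=
  if x = a then 3*n
  else if x = b then 2*n
  else if (a < x ∧ x ≤ p) ∨ (p < x ∧ x < a) then 3*n + (x - a) + (a - x)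
  else if (b < x ∧ x ≤ p) ∨ (p < x ∧ x < b) then 2*n + (x - b) + (b - x)
  else if (x < a ∧ a ≤ p) ∨ (a < x ∧ p < a) then n - 1 - (x - a) - (a - x)
  else 2*n - (x - b) - (b - x)

lemma gfun_inj (n p a b : ℕ) (hn : 3 ≤ n) (hpn : p + 1 < n) (han : a < n) (hbn : b < n)
    (hside : (a ≤ p ∧ p < b) ∨ (b ≤ p ∧ p < a)) :
    ∀ x y, x < n → y < n → gfun n p a b x = gfun n p a b y → x = y := by
  intro x y hx hy
  simp only [gfun]
  split_ifs <;> omega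

set_option maxHeartbeats 2000000 in
lemma gfun_mono (n p a b t' : ℕ) (hn : 3 ≤ n) (hpn : p + 1 < n) (han : a < n) (hbn : b < n)
    (hside : (a ≤ p ∧ p < b) ∨ (b ≤ p ∧ p < a))
    (ht' : (a ≤ p ∧ t' = p) ∨ (p < a ∧ t' = p + 1)) :
    ∀ k, k + 1 < n →
      (k + 1 ≤ t' → gfun n p a b k < gfun n p a b (k+1)) ∧
      (t' ≤ k → gfun n p a b (k+1) < gfun n p a b k) := by
  intro k hk
  simp only [gfun]
  constructor <;> intro h <;> (split_ifs <;> omega)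

lemma gfun_a (n p a b : ℕ) : gfun n p a b a = 3*n := by simp [gfun]

lemma gfun_b (n p a b : ℕ) (h : a ≠ b) : gfun n p a b b = 2*n := by
  simp [gfun, Ne.symm h]

lemma gfun_lt_a (n p a b : ℕ) (hn : 3 ≤ n) (c : ℕ) (hc : c < n) (hca : c ≠ a)
    (hnA : ¬((a < c ∧ c ≤ p) ∨ (p < c ∧ c < a)))
    (hnB : ¬((b < c ∧ c ≤ p) ∨ (p < c ∧ c < b))) :
    gfun n p a b c < 3*n := by
  simp only [gfun]
  split_ifs <;> omega

lemma gfun_lt_b (n p a b : ℕ) (hn : 3 ≤ n) (c : ℕ) (hc : c < n) (hca : c ≠ a) (hcb : c ≠ b)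
    (hnA : ¬((a < c ∧ c ≤ p) ∨ (p < c ∧ c < a)))
    (hnB : ¬((b < c ∧ c ≤ p) ∨ (p < c ∧ c < b))) :
    gfun n p a b c < 2*n := by
  simp only [gfun]
  split_ifs <;> omega

lemma sp_asymm {n : ℕ} {P : Fin n → Fin n → Prop} (h : IsStrictTotalOrder (Fin n) P)
    {x y : Fin n} (h1 : P x y) (h2 : P y x) : False :=
  h.irrefl x (h.trans x y x h1 h2)

lemma chain_up {n : ℕ} {P : Fin n → Fin n → Prop} (hsp : singlePeaked P)
    {t : Fin n} (ht : top P Set.univ t) :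
    ∀ d : ℕ, ∀ i j : Fin n, (j : ℕ) = (i : ℕ) + d + 1 → (j : ℕ) ≤ (t : ℕ) → P j i := by
  obtain ⟨hsto, hmono⟩ := hsp
  intro d
  induction d with
  | zero =>
    intro i j hj hjt
    have hjn := j.isLt
    have hk : (i : ℕ) + 1 < n := by omega
    have h := (hmono t ht (i : ℕ) hk).1 (by omega)
    have hji : j = ⟨(i : ℕ) + 1, hk⟩ := Fin.ext (by simp only [Fin.val_mk]; omega)
    rw [hji]
    simpa using h
  | succ d ih =>
    intro i j hj hjt
    have hjn := j.isLt
    have htn := t.isLt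
    have hk : (i : ℕ) + 1 < n := by omega
    have h1 : P ⟨(i : ℕ) + 1, hk⟩ i := by
      have h := (hmono t ht (i : ℕ) hk).1 (by omega)
      simpa using h
    have h2 : P j ⟨(i : ℕ) + 1, hk⟩ := ih ⟨(i : ℕ) + 1, hk⟩ j (by simp; omega) hjt
    exact hsto.trans _ _ _ h2 h1

lemma chain_dn {n : ℕ} {P : Fin n → Fin n → Prop} (hsp : singlePeaked P)
    {t : Fin n} (ht : top P Set.univ t) :
    ∀ d : ℕ, ∀ i j : Fin n, (j : ℕ) = (i : ℕ) + d + 1 → (t : ℕ) ≤ (i : ℕ) → P i j := by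
  obtain ⟨hsto, hmono⟩ := hsp
  intro d
  induction d with
  | zero =>
    intro i j hj hti
    have hjn := j.isLt
    have hk : (i : ℕ) + 1 < n := by omega
    have h := (hmono t ht (i : ℕ) hk).2 (by omega)
    have hji : j = ⟨(i : ℕ) + 1, hk⟩ := Fin.ext (by simp only [Fin.val_mk]; omega)
    rw [hji]
    simpa using h
  | succ d ih =>
    intro i j hj hti
    have hjn := j.isLt
    have hk : (i : ℕ) + 1 < n := by omega
    have h1 : P i ⟨(i : ℕ) + 1, hk⟩ := by
      have h := (hmono t ht (i : ℕ) hk).2 (by omega)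
      simpa using h
    have h2 : P ⟨(i : ℕ) + 1, hk⟩ j := ih ⟨(i : ℕ) + 1, hk⟩ j (by simp; omega) (by simp; omega)
    exact hsto.trans _ _ _ h1 h2

/-- If `a` is attainable as the top of `O'` by some preference in the domain, then no element of
`O'` lies strictly between `a` and the split point on `a`'s side. -/
lemma attain_between {n : ℕ} {p : Fin n} {O' : Set (Fin n)} {a : Fin n}
    (h : ∃ P ∈ SP2Domain n p, top P O' a) :
    ∀ o ∈ O', ¬(((a : ℕ) < o ∧ (o : ℕ) ≤ p) ∨ ((p : ℕ) < o ∧ (o : ℕ) < a)) := by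
  obtain ⟨P, ⟨hsp, t, ht, htv⟩, hta⟩ := h
  intro o ho hcon
  have hne : o ≠ a := by
    intro he; subst he; omega
  have hao : P a o := hta.2 o ho hne
  have hoa : P o a := by
    rcases hcon with ⟨h1, h2⟩ | ⟨h1, h2⟩
    · exact chain_up hsp ht ((o : ℕ) - a - 1) a o (by omega) (by omega)
    · exact chain_dn hsp ht ((a : ℕ) - o - 1) o a (by omega) (by omega)
  exact sp_asymm hsp.1 hao hoa

/-- A utility function that is strictly increasing up to `t` and strictly decreasing after `t`
induces a single-peaked preference with peak `t`. -/
lemma sp_of_g {n : ℕ} (g : ℕ → ℕ) (t : Fin n)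
    (hinj : ∀ x y : Fin n, g x = g y → x = y)
    (hup : ∀ k, k + 1 < n → k + 1 ≤ (t : ℕ) → g k < g (k + 1))
    (hdn : ∀ k, k + 1 < n → (t : ℕ) ≤ k → g (k + 1) < g k) :
    singlePeaked (fun x y : Fin n => g y < g x) ∧
      top (fun x y : Fin n => g y < g x) Set.univ t := by
  have gup : ∀ j, j < n → j ≤ (t : ℕ) → ∀ i, i < j → g i < g j := by
    intro j
    induction j with
    | zero => intro _ _ i hi; omega
    | succ j ih =>
      intro hjn hjt i hij
      have h1 : g j < g (j + 1) := hup j hjn hjt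
      rcases Nat.lt_or_ge i j with h | h
      · exact lt_trans (ih (by omega) (by omega) i h) h1
      · have : i = j := by omega
        subst this; exact h1
  have gdn : ∀ j, j < n → ∀ i, (t : ℕ) ≤ i → i < j → g j < g i := by
    intro j
    induction j with
    | zero => intro _ i _ hi; omega
    | succ j ih =>
      intro hjn i hti hij
      have h1 : g (j + 1) < g j := hdn j hjn (by omega)
      rcases Nat.lt_or_ge i j with h | h
      · exact lt_trans h1 (ih (by omega) i hti h)
      · have : i = j := by omega
        subst this; exact h1
  have hmax : ∀ c : Fin n, c ≠ t → g c < g t := by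
    intro c hc
    rcases Nat.lt_trichotomy (c : ℕ) (t : ℕ) with h | h | h
    · exact gup t t.isLt (le_refl _) c h
    · exact absurd (Fin.ext h) hc
    · exact gdn c c.isLt t (le_refl _) h
  have htop : top (fun x y : Fin n => g y < g x) Set.univ t :=
    ⟨Set.mem_univ t, fun c _ hc => hmax c hc⟩
  refine ⟨⟨?_, ?_⟩, htop⟩
  · refine { trichotomous := ?_, irrefl := ?_, trans := ?_ }
    · intro x y
      rcases Nat.lt_trichotomy (g x) (g y) with h | h | h
      · intro _ h2; exact absurd h h2
      · intro _ _; exact hinj x y h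
      · intro h1 _; exact absurd h h1
    · intro x; exact lt_irrefl _
    · intro x y z h1 h2; exact lt_trans h2 h1
  · intro p' hp' k hk
    have hp't : p' = t := by
      by_contra hne
      have h1 : g p' < g t := hmax p' hne
      have h2 : g t < g p' := hp'.2 t (Set.mem_univ t) (fun he => hne he.symm)
      omega
    subst hp't
    constructor
    · intro h
      show g (⟨k, by omega⟩ : Fin n) < g (⟨k + 1, hk⟩ : Fin n)
      simpa using hup k hk h
    · intro h
      show g (⟨k + 1, hk⟩ : Fin n) < g (⟨k, by omega⟩ : Fin n)
      simpa using hdn k hk h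

theorem stmt6 {n : ℕ} (hn : 3 ≤ n) (p : Fin n) (hp : (p : ℕ) + 1 < n) :
    topTwo (SP2Domain n p) := by
  intro O' _ a b ha hb hab hA hB
  have hAemp := attain_between hA
  have hBemp := attain_between hB
  have hne' : (a : ℕ) ≠ (b : ℕ) := fun h => hab (Fin.ext h)
  have han := a.isLt
  have hbn := b.isLt
  have hside : ((a : ℕ) ≤ (p : ℕ) ∧ (p : ℕ) < (b : ℕ)) ∨
      ((b : ℕ) ≤ (p : ℕ) ∧ (p : ℕ) < (a : ℕ)) := by
    have h1 := hAemp b hb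
    have h2 := hBemp a ha
    omega
  set t : Fin n := if (a : ℕ) ≤ (p : ℕ) then p else ⟨(p : ℕ) + 1, hp⟩ with htdef
  have htv : ((a : ℕ) ≤ (p : ℕ) ∧ (t : ℕ) = (p : ℕ)) ∨
      ((p : ℕ) < (a : ℕ) ∧ (t : ℕ) = (p : ℕ) + 1) := by
    by_cases h : (a : ℕ) ≤ (p : ℕ)
    · left; exact ⟨h, by simp [htdef, h]⟩
    · right; exact ⟨by omega, by simp [htdef, h]⟩
  have hinj : ∀ x y : Fin n, gfun n p a b x = gfun n p a b y → x = y := fun x y hxy =>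
    Fin.ext (gfun_inj n p a b hn hp han hbn hside x y x.isLt y.isLt hxy)
  have hup : ∀ k, k + 1 < n → k + 1 ≤ (t : ℕ) →
      gfun n p a b k < gfun n p a b (k + 1) := fun k hk hkt =>
    (gfun_mono n p a b t hn hp han hbn hside htv k hk).1 hkt
  have hdn : ∀ k, k + 1 < n → (t : ℕ) ≤ k →
      gfun n p a b (k + 1) < gfun n p a b k := fun k hk hkt =>
    (gfun_mono n p a b t hn hp han hbn hside htv k hk).2 hkt
  obtain ⟨hsp, htop⟩ := sp_of_g (gfun n p a b) t hinj hup hdn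
  refine ⟨fun x y : Fin n => gfun n p a b y < gfun n p a b x,
    ⟨hsp, t, htop, by omega⟩, ⟨ha, ?_⟩, ⟨⟨hb, ?_⟩, ?_⟩⟩
  · -- a is the top of O'
    intro c hc hca
    show gfun n p a b c < gfun n p a b a
    rw [gfun_a]
    exact gfun_lt_a n p a b hn c c.isLt (fun h => hca (Fin.ext h)) (hAemp c hc) (hBemp c hc)
  · -- b ∈ O' \ {a}
    simp only [Set.mem_singleton_iff]
    exact fun h => hab h.symm
  · -- b is the top of O' \ {a}
    intro c hc hcb
    show gfun n p a b c < gfun n p a b b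
    rw [gfun_b n p a b hne']
    refine gfun_lt_b n p a b hn c c.isLt ?_ (fun h => hcb (Fin.ext h))
      (hAemp c hc.1) (hBemp c hc.1)
    intro h
    exact hc.2 (Set.mem_singleton_iff.mpr (Fin.ext h))
end

section
/- For any partial order ≻ on the set of objects O, the partial agreement domain D^{PA}(≻), consisting of all strict linear orders on O that extend ≻, satisfies the top-two condition. -/
/-- The partial agreement domain: all strict linear orders extending the strict
partial order `s`. -/
def PADomain {α : Type*} (s : α → α → Prop) : Set (α → α → Prop) :=
  {P | IsStrictTotalOrder α P ∧ ∀ a b : α, s a b → P a b}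

theorem stmt9 {α : Type*} [Fintype α] (s : α → α → Prop) (hs : IsStrictOrder α s) :
    topTwo (PADomain s) := by
  intro O' _hne a b haO hbO hab ⟨Pa, hPaD, hPaO, hPaTop⟩ ⟨Pb, hPbD, hPbO, hPbTop⟩
  have htr : ∀ {x y z}, s x y → s y z → s x z := fun h1 h2 => hs.trans _ _ _ h1 h2
  have hirr : ∀ x, ¬ s x x := hs.irrefl
  -- no element of O' is s-above a
  have hA : ∀ c ∈ O', ¬ s c a := by
    intro c hc hca
    by_cases hc' : c = a
    · exact hirr a (hc' ▸ hca)
    · exact hPaD.1.irrefl a (hPaD.1.trans _ _ _ (hPaTop c hc hc') (hPaD.2 _ _ hca))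
  -- no element of O' is s-above b
  have hB : ∀ c ∈ O', ¬ s c b := by
    intro c hc hcb
    by_cases hc' : c = b
    · exact hirr b (hc' ▸ hcb)
    · exact hPbD.1.irrefl b (hPbD.1.trans _ _ _ (hPbTop c hc hc') (hPbD.2 _ _ hcb))
  -- the strict order forcing a on top of O' and b on top of O' \ {a}
  set t : α → α → Prop := fun x y =>
    s x y
    ∨ ((x = a ∨ s x a) ∧ ∃ c, c ∈ O' ∧ c ≠ a ∧ (c = y ∨ s c y))
    ∨ ((x = b ∨ s x b) ∧ ∃ c, c ∈ O' ∧ c ≠ a ∧ c ≠ b ∧ (c = y ∨ s c y)) with ht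
  have htirr : ∀ x, ¬ t x x := by
    intro x hx
    rcases hx with h | ⟨hxa, c, hc, hca, hcx⟩ | ⟨hxb, c, hc, hca, hcb, hcx⟩
    · exact hirr x h
    · have hsca : s c a ∨ c = a := by
        rcases hxa with rfl | hxa
        · rcases hcx with rfl | h
          · exact Or.inr rfl
          · exact Or.inl h
        · rcases hcx with rfl | h
          · exact Or.inl hxa
          · exact Or.inl (htr h hxa)
      rcases hsca with h | h
      · exact hA c hc h
      · exact hca h
    · have hscb : s c b ∨ c = b := by
        rcases hxb with rfl | hxb
        · rcases hcx with rfl | h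
          · exact Or.inr rfl
          · exact Or.inl h
        · rcases hcx with rfl | h
          · exact Or.inl hxb
          · exact Or.inl (htr h hxb)
      rcases hscb with h | h
      · exact hB c hc h
      · exact hcb h
  have httr : ∀ {x y z}, t x y → t y z → t x z := by
    intro x y z hxy hyz
    rcases hxy with h1 | ⟨hxa, c, hc, hca, hcy⟩ | ⟨hxb, c, hc, hca, hcb, hcy⟩
    · -- s x y
      rcases hyz with h2 | ⟨hya, hw⟩ | ⟨hyb, hw⟩
      · exact Or.inl (htr h1 h2)
      · refine Or.inr (Or.inl ⟨Or.inr ?_, hw⟩)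
        rcases hya with rfl | h; · exact h1
        · exact htr h1 h
      · refine Or.inr (Or.inr ⟨Or.inr ?_, hw⟩)
        rcases hyb with rfl | h; · exact h1
        · exact htr h1 h
    · -- clause 2 for (x,y)
      rcases hyz with h2 | ⟨hya, hw⟩ | ⟨hyb, c', hc', hc'a, hc'b, hc'z⟩
      · refine Or.inr (Or.inl ⟨hxa, c, hc, hca, Or.inr ?_⟩)
        rcases hcy with rfl | h; · exact h2
        · exact htr h h2
      · -- impossible: y is (weakly) above a but dominated by some c ∈ O'
        exfalso
        have : s c a ∨ c = a := by
          rcases hya with rfl | hya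
          · rcases hcy with rfl | h; · exact Or.inr rfl
            · exact Or.inl h
          · rcases hcy with rfl | h; · exact Or.inl hya
            · exact Or.inl (htr h hya)
        rcases this with h | h
        · exact hA c hc h
        · exact hca h
      · -- y weakly above b; either contradiction with hB, or (c = b = y) and conclude via c'
        rcases hyb with rfl | hyb
        · rcases hcy with rfl | h
          · exact Or.inr (Or.inl ⟨hxa, c', hc', hc'a, hc'z⟩)
          · exact absurd h (hB c hc)
        · exfalso
          rcases hcy with rfl | h
          · exact hB c hc hyb
          · exact hB c hc (htr h hyb)
    · -- clause 3 for (x,y)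
      rcases hyz with h2 | ⟨hya, hw⟩ | ⟨hyb, hw⟩
      · refine Or.inr (Or.inr ⟨hxb, c, hc, hca, hcb, Or.inr ?_⟩)
        rcases hcy with rfl | h; · exact h2
        · exact htr h h2
      · exfalso
        have : s c a ∨ c = a := by
          rcases hya with rfl | hya
          · rcases hcy with rfl | h; · exact Or.inr rfl
            · exact Or.inl h
          · rcases hcy with rfl | h; · exact Or.inl hya
            · exact Or.inl (htr h hya)
        rcases this with h | h
        · exact hA c hc h
        · exact hca h
      · exfalso
        have : s c b ∨ c = b := by
          rcases hyb with rfl | hyb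
          · rcases hcy with rfl | h; · exact Or.inr rfl
            · exact Or.inl h
          · rcases hcy with rfl | h; · exact Or.inl hyb
            · exact Or.inl (htr h hyb)
        rcases this with h | h
        · exact hB c hc h
        · exact hcb h
  -- reflexive closure of t is a partial order
  let r : α → α → Prop := fun x y => t x y ∨ x = y
  have hrpo : IsPartialOrder α r :=
    { refl := fun x => Or.inr rfl
      trans := by
        intro x y z hxy hyz
        rcases hxy with h1 | rfl
        · rcases hyz with h2 | rfl
          · exact Or.inl (httr h1 h2)
          · exact Or.inl h1
        · exact hyz
      antisymm := by
        intro x y hxy hyx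
        rcases hxy with h1 | rfl
        · rcases hyx with h2 | rfl
          · exact absurd (httr h1 h2) (htirr x)
          · rfl
        · rfl }
  obtain ⟨p, hp, hrp⟩ := @extend_partialOrder α r hrpo
  -- the desired linear order
  refine ⟨fun x y => p x y ∧ x ≠ y, ⟨?_, ?_⟩, ?_, ?_⟩
  · exact
      { irrefl := fun x hx => hx.2 rfl
        trichotomous := by
          intro x y
          rcases eq_or_ne x y with rfl | hxy
          · exact fun _ _ => rfl
          rcases hp.total x y with h | h
          · exact fun h1 _ => (h1 ⟨h, hxy⟩).elim
          · exact fun _ h2 => (h2 ⟨h, hxy.symm⟩).elim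
        trans := by
          rintro x y z ⟨hxy, hxy'⟩ ⟨hyz, hyz'⟩
          refine ⟨hp.trans _ _ _ hxy hyz, fun e => ?_⟩
          exact hxy' (hp.antisymm _ _ hxy (e ▸ hyz)) }
  · -- extends s
    intro x y hxy
    exact ⟨hrp _ _ (Or.inl (Or.inl hxy)), fun e => hirr x (e ▸ hxy)⟩
  · -- top of O' is a
    refine ⟨haO, fun c hc hca => ?_⟩
    exact ⟨hrp _ _ (Or.inl (Or.inr (Or.inl ⟨Or.inl rfl, c, hc, hca, Or.inl rfl⟩))),
      fun e => hca e.symm⟩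
  · -- top of O' \ {a} is b
    refine ⟨⟨hbO, hab.symm⟩, fun c hc hcb => ?_⟩
    exact ⟨hrp _ _ (Or.inl (Or.inr (Or.inr ⟨Or.inl rfl, c, hc.1, hc.2, hcb, Or.inl rfl⟩))),
      fun e => hcb e.symm⟩
end

section
/- In the partial agreement domain D^{PA}(≻) for a partial order ≻ on O, for any nonempty O' ⊆ O and any a ∈ O', a is most-preferred within O' by some preference in the domain if and only if a is ≻-undominated in O' (i.e., there is no b ∈ O' with b ≻ a). -/
theorem stmt10 {α : Type*} [Fintype α] (s : α → α → Prop) (hs : IsStrictOrder α s)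
    (O' : Set α) (hO' : O'.Nonempty) (a : α) (ha : a ∈ O') :
    (∃ P ∈ PADomain s, top P O' a) ↔ ∀ b ∈ O', ¬ s b a := by
  have strans : ∀ {x y z}, s x y → s y z → s x z :=
    fun hxy hyz => hs.toIsTrans.trans _ _ _ hxy hyz
  have sirr : ∀ x, ¬ s x x := fun x => hs.toIrrefl.irrefl x
  constructor
  · rintro ⟨P, ⟨hP, hext⟩, hmem, htop⟩ b hb hba
    have hPba := hext b a hba
    by_cases hbe : b = a
    · subst hbe; exact hP.toIrrefl.irrefl b hPba
    · exact hP.toIrrefl.irrefl a (hP.toIsTrans.trans _ _ _ (htop b hb hbe) hPba)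
  · intro hund
    -- U : elements dominating a, together with a itself
    set U : α → Prop := fun x => s x a ∨ x = a with hU
    have haU : U a := Or.inr rfl
    -- t : augmented strict order putting U above the complement of U
    set t : α → α → Prop := fun x y => s x y ∨ (U x ∧ ¬ U y) with ht
    have hUdown : ∀ {x y}, s x y → U y → U x := by
      rintro x y hxy (hya | rfl)
      · exact Or.inl (strans hxy hya)
      · exact Or.inl hxy
    have t_trans : ∀ {x y z}, t x y → t y z → t x z := by
      rintro x y z (hxy | ⟨hUx, hny⟩) (hyz | ⟨hUy, hnz⟩)
      · exact Or.inl (strans hxy hyz)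
      · exact Or.inr ⟨hUdown hxy hUy, hnz⟩
      · exact Or.inr ⟨hUx, fun hz => hny (hUdown hyz hz)⟩
      · exact absurd hUy hny
    have t_irrefl : ∀ x, ¬ t x x := by
      rintro x (h | ⟨h1, h2⟩)
      · exact sirr x h
      · exact h2 h1
    have t_asymm : ∀ {x y}, t x y → ¬ t y x :=
      fun hxy hyx => t_irrefl _ (t_trans hxy hyx)
    -- reflexive closure
    set r : α → α → Prop := fun x y => t x y ∨ x = y with hr
    haveI : IsPartialOrder α r :=
      { refl := fun x => Or.inr rfl
        trans := by
          rintro x y z (hxy | rfl) (hyz | rfl)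
          · exact Or.inl (t_trans hxy hyz)
          · exact Or.inl hxy
          · exact Or.inl hyz
          · exact Or.inr rfl
        antisymm := by
          rintro x y (hxy | rfl) (hyx | h)
          · exact absurd hyx (t_asymm hxy)
          · exact h.symm
          · rfl
          · rfl }
    obtain ⟨L, hL, hrL⟩ := extend_partialOrder r
    set P : α → α → Prop := fun x y => L x y ∧ x ≠ y with hP
    have htP : ∀ {x y}, t x y → P x y := by
      intro x y hxy
      refine ⟨hrL _ _ (Or.inl hxy), ?_⟩
      rintro rfl; exact t_irrefl _ hxy
    refine ⟨P, ⟨?_, fun x y hxy => htP (Or.inl hxy)⟩, ha, ?_⟩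
    · exact
      { trichotomous := by
          intro x y
          intro hxy hyx
          by_contra hne
          · rcases hL.total x y with h | h
            · exact hxy ⟨h, hne⟩
            · exact hyx ⟨h, Ne.symm hne⟩
        irrefl := by rintro x ⟨_, h⟩; exact h rfl
        trans := by
          rintro x y z ⟨hxy, hnxy⟩ ⟨hyz, hnyz⟩
          refine ⟨hL.trans _ _ _ hxy hyz, ?_⟩
          rintro rfl
          exact hnxy (hL.antisymm _ _ hxy hyz) }
    · intro c hc hcne
      refine htP (Or.inr ⟨haU, ?_⟩)
      rintro (hca | rfl)
      · exact hund c hc hca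
      · exact hcne rfl
end

section
/- For n ≥ 4, the circular domain with respect to the cyclic order o1 → o2 → ... → on → o1 fails the top-two condition: within the quadruple O' = {o1, o2, o3, o4}, the objects o1 and o3 can each be most-preferred within O' by some circular preference, but no circular preference ranks o1 first and o3 second (nor o3 first and o1 second) within O'. -/
/-- Clockwise circular preference with peak p: o_p ≻ o_{p+1} ≻ ... (indices mod n). -/
def cw {n : ℕ} (p : Fin n) : Fin n → Fin n → Prop := fun a b => (a - p).val < (b - p).val

/-- Counterclockwise circular preference with peak p: o_p ≻ o_{p-1} ≻ ... (indices mod n). -/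
def ccw {n : ℕ} (p : Fin n) : Fin n → Fin n → Prop := fun a b => (p - a).val < (p - b).val

/-- The circular domain w.r.t. the cyclic order o1 → o2 → ... → on → o1. -/
def circDomain (n : ℕ) : Set (Fin n → Fin n → Prop) := {P | ∃ p : Fin n, P = cw p ∨ P = ccw p}

lemma succCases {n a : ℕ} (ha : a < n) : (a + 1) % n = a + 1 ∨ ((a + 1) % n = 0 ∧ a + 1 = n) := by
  rcases Nat.lt_or_ge (a + 1) n with h | h
  · exact Or.inl (Nat.mod_eq_of_lt h)
  · have h' : a + 1 = n := by omega
    exact Or.inr ⟨by simp [h'], h'⟩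

lemma val_add_one' {n : ℕ} [NeZero n] (x : Fin n) : (x + 1).val = (x.val + 1) % n := by
  rw [Fin.add_def, Fin.val_one']
  conv_rhs => rw [Nat.add_mod, Nat.mod_eq_of_lt x.isLt]

lemma chainFalse1 {n a b c d : ℕ} (hn : 4 ≤ n) (ha : a < n) (hb' : b < n) (hc' : c < n)
    (hb : b = (a + 1) % n) (hc : c = (b + 1) % n) (hd : d = (c + 1) % n)
    (h1 : a < b) (h2 : a < d) (h3 : c < b) (h4 : c < d) : False := by
  rcases succCases ha with h | ⟨h, hh⟩ <;> rw [h] at hb <;>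
    rcases succCases hb' with h' | ⟨h', hh'⟩ <;> rw [h'] at hc <;>
      rcases succCases hc' with h'' | ⟨h'', hh''⟩ <;> rw [h''] at hd <;> omega

lemma chainFalse2 {n a b c d : ℕ} (hn : 4 ≤ n) (ha : a < n) (hb' : b < n) (hc' : c < n)
    (hb : b = (a + 1) % n) (hc : c = (b + 1) % n) (hd : d = (c + 1) % n)
    (h1 : d < a) (h2 : d < c) (h3 : b < a) (h4 : b < c) : False := by
  rcases succCases ha with h | ⟨h, hh⟩ <;> rw [h] at hb <;>
    rcases succCases hb' with h' | ⟨h', hh'⟩ <;> rw [h'] at hc <;>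
      rcases succCases hc' with h'' | ⟨h'', hh''⟩ <;> rw [h''] at hd <;> omega

theorem stmt11 {n : ℕ} [NeZero n] (hn : 4 ≤ n) :
    (∃ P ∈ circDomain n, top P ({0, 1, 2, 3} : Set (Fin n)) 0) ∧
    (∃ P ∈ circDomain n, top P ({0, 1, 2, 3} : Set (Fin n)) 2) ∧
    (∀ P ∈ circDomain n, top P ({0, 1, 2, 3} : Set (Fin n)) 0 →
      ¬ top P (({0, 1, 2, 3} : Set (Fin n)) \ {0}) 2) ∧
    (∀ P ∈ circDomain n, top P ({0, 1, 2, 3} : Set (Fin n)) 2 →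
      ¬ top P (({0, 1, 2, 3} : Set (Fin n)) \ {2}) 0) := by
  have v0 : ((0 : Fin n) : ℕ) = 0 := rfl
  have v1 : ((1 : Fin n) : ℕ) = 1 := by
    have := Fin.val_cast_of_lt (n := n) (a := 1) (by omega); simpa using this
  have v2 : ((2 : Fin n) : ℕ) = 2 := by
    have := Fin.val_cast_of_lt (n := n) (a := 2) (by omega); simpa using this
  have v3 : ((3 : Fin n) : ℕ) = 3 := by
    have := Fin.val_cast_of_lt (n := n) (a := 3) (by omega); simpa using this
  have ne10 : (1 : Fin n) ≠ 0 := fun h => by rw [Fin.ext_iff, v1, v0] at h; omega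
  have ne30 : (3 : Fin n) ≠ 0 := fun h => by rw [Fin.ext_iff, v3, v0] at h; omega
  have ne12 : (1 : Fin n) ≠ 2 := fun h => by rw [Fin.ext_iff, v1, v2] at h; omega
  have ne32 : (3 : Fin n) ≠ 2 := fun h => by rw [Fin.ext_iff, v3, v2] at h; omega
  have vne : ∀ x : Fin n, x ≠ 0 → (x : ℕ) ≠ 0 := fun x hx h => hx (Fin.ext (by simp [h]))
  have m1 : (1 : Fin n) ∈ ({0, 1, 2, 3} : Set (Fin n)) := by simp
  have m3 : (3 : Fin n) ∈ ({0, 1, 2, 3} : Set (Fin n)) := by simp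
  have ecw1 : ∀ p : Fin n, ((1 : Fin n) - p).val = (((0 : Fin n) - p).val + 1) % n := by
    intro p; rw [show (1 : Fin n) - p = ((0 : Fin n) - p) + 1 by open Fin.CommRing in ring, val_add_one']
  have ecw2 : ∀ p : Fin n, ((2 : Fin n) - p).val = (((1 : Fin n) - p).val + 1) % n := by
    intro p; rw [show (2 : Fin n) - p = ((1 : Fin n) - p) + 1 by open Fin.CommRing in ring, val_add_one']
  have ecw3 : ∀ p : Fin n, ((3 : Fin n) - p).val = (((2 : Fin n) - p).val + 1) % n := by
    intro p; rw [show (3 : Fin n) - p = ((2 : Fin n) - p) + 1 by open Fin.CommRing in ring, val_add_one']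
  have eccw2 : ∀ p : Fin n, (p - (2 : Fin n)).val = ((p - (3 : Fin n)).val + 1) % n := by
    intro p; rw [show p - (2 : Fin n) = (p - (3 : Fin n)) + 1 by open Fin.CommRing in ring, val_add_one']
  have eccw1 : ∀ p : Fin n, (p - (1 : Fin n)).val = ((p - (2 : Fin n)).val + 1) % n := by
    intro p; rw [show p - (1 : Fin n) = (p - (2 : Fin n)) + 1 by open Fin.CommRing in ring, val_add_one']
  have eccw0 : ∀ p : Fin n, (p - (0 : Fin n)).val = ((p - (1 : Fin n)).val + 1) % n := by
    intro p; rw [show p - (0 : Fin n) = (p - (1 : Fin n)) + 1 by open Fin.CommRing in ring, val_add_one']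
  refine ⟨⟨cw 0, ⟨0, Or.inl rfl⟩, by simp, fun c _ hc => ?_⟩,
    ⟨cw 2, ⟨2, Or.inl rfl⟩, by simp, fun c _ hc => ?_⟩, ?_, ?_⟩
  · show ((0 : Fin n) - 0).val < (c - 0).val
    rw [sub_zero, sub_zero, v0]
    exact Nat.pos_of_ne_zero (vne c hc)
  · show ((2 : Fin n) - 2).val < (c - 2).val
    rw [sub_self, v0]
    exact Nat.pos_of_ne_zero (vne _ (sub_ne_zero_of_ne hc))
  · rintro P ⟨p, rfl | rfl⟩ htop hsec
    · exact chainFalse1 hn (Fin.isLt _) (Fin.isLt _) (Fin.isLt _) (ecw1 p) (ecw2 p) (ecw3 p)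
        (htop.2 1 m1 ne10) (htop.2 3 m3 ne30) (hsec.2 1 ⟨m1, ne10⟩ ne12) (hsec.2 3 ⟨m3, ne30⟩ ne32)
    · exact chainFalse2 hn (Fin.isLt _) (Fin.isLt _) (Fin.isLt _) (eccw2 p) (eccw1 p) (eccw0 p)
        (htop.2 3 m3 ne30) (htop.2 1 m1 ne10) (hsec.2 3 ⟨m3, ne30⟩ ne32) (hsec.2 1 ⟨m1, ne10⟩ ne12)
  · rintro P ⟨p, rfl | rfl⟩ htop hsec
    · exact chainFalse1 hn (Fin.isLt _) (Fin.isLt _) (Fin.isLt _) (ecw1 p) (ecw2 p) (ecw3 p)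
        (hsec.2 1 ⟨m1, ne12⟩ ne10) (hsec.2 3 ⟨m3, ne32⟩ ne30) (htop.2 1 m1 ne12) (htop.2 3 m3 ne32)
    · exact chainFalse2 hn (Fin.isLt _) (Fin.isLt _) (Fin.isLt _) (eccw2 p) (eccw1 p) (eccw0 p)
        (hsec.2 3 ⟨m3, ne32⟩ ne30) (hsec.2 1 ⟨m1, ne12⟩ ne10) (htop.2 3 m3 ne32) (htop.2 1 m1 ne12)
end

section
/- If a domain D satisfies the top-two condition, then any mechanism φ on D^N that is individually rational, pair efficient, and strategyproof coincides with the Top Trading Cycles (TTC) mechanism on every profile in D^N. -/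
/-! Housing market: agents and objects are both `Fin n`; agent i is endowed with
object i. A preference is a strict linear order on objects, modelled as a binary
relation (`P a b` means a is strictly preferred to b). -/

abbrev PrefRel (n : ℕ) := Fin n → Fin n → Prop

/-- A preference profile where agent i's preference must lie in the domain `Ds i`. -/
def Profile (n : ℕ) (Ds : Fin n → Set (PrefRel n)) : Type := {Pr : Fin n → PrefRel n // ∀ i, Pr i ∈ Ds i}

/-- Individual rationality: every agent weakly prefers their assignment to their endowment. -/
def IR {n : ℕ} {Ds : Fin n → Set (PrefRel n)} (φ : Profile n Ds → Fin n → Fin n) : Prop :=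
  ∀ P : Profile n Ds, ∀ i : Fin n, φ P i = i ∨ P.1 i (φ P i) i

/-- Strategyproofness: truth-telling is weakly dominant within the domain. -/
def SP {n : ℕ} {Ds : Fin n → Set (PrefRel n)} (φ : Profile n Ds → Fin n → Fin n) : Prop :=
  ∀ P Q : Profile n Ds, ∀ i : Fin n, (∀ j, j ≠ i → Q.1 j = P.1 j) →
    φ P i = φ Q i ∨ P.1 i (φ P i) (φ Q i)

/-- Pair efficiency: no two agents each strictly prefer the other's assignment. -/
def PairEff {n : ℕ} {Ds : Fin n → Set (PrefRel n)} (φ : Profile n Ds → Fin n → Fin n) : Prop :=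
  ∀ P : Profile n Ds, ∀ i j : Fin n, ¬ (P.1 i (φ P j) (φ P i) ∧ P.1 j (φ P i) (φ P j))

/-- Pareto efficiency: any allocation that weakly improves upon φ(P) for every agent
coincides with φ(P). -/
def ParetoEff {n : ℕ} {Ds : Fin n → Set (PrefRel n)} (φ : Profile n Ds → Fin n → Fin n) : Prop :=
  ∀ P : Profile n Ds, ∀ y : Fin n → Fin n, Function.Bijective y →
    (∀ i, y i = φ P i ∨ P.1 i (y i) (φ P i)) → ∀ i, y i = φ P i

/-- `x` is the Top Trading Cycles allocation at the profile `Pr`: there is an assignment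
of rounds `r` to agents (= objects, via endowment) such that each agent i receives their
most preferred object among objects whose owner is removed no earlier than i, and the
owner of the object i receives is removed in the same round as i. -/
def isTTC {n : ℕ} (Pr : Fin n → PrefRel n) (x : Fin n → Fin n) : Prop :=
  Function.Bijective x ∧ ∃ r : Fin n → ℕ, ∀ i : Fin n,
    r (x i) = r i ∧ ∀ o : Fin n, r i ≤ r o → o ≠ x i → Pr i (x i) o

namespace TTCaux

open Function Finset

attribute [local instance] Classical.propDecidable

variable {n : ℕ}

lemma asym_of {P : PrefRel n} (hP : IsStrictTotalOrder (Fin n) P) {a b : Fin n}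
    (hab : P a b) : ¬ P b a := by
  haveI := hP
  exact fun hba => irrefl_of P a (trans_of P hab hba)

lemma exists_top {P : PrefRel n} (hP : IsStrictTotalOrder (Fin n) P)
    {S : Finset (Fin n)} (hS : S.Nonempty) : ∃ a, top P (↑S) a := by
  haveI := hP
  induction S using Finset.induction_on with
  | empty => exact absurd hS (by simp)
  | @insert a s ha ih =>
    rcases s.eq_empty_or_nonempty with rfl | hs
    · exact ⟨a, by simp [top], fun c hc hca => absurd (by simpa using hc) hca⟩
    · obtain ⟨b, hbmem, hbtop⟩ := ih hs
      have hbS : b ∈ s := by simpa using hbmem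
      rcases trichotomous_of P a b with hab | rfl | hba
      · refine ⟨a, by simp [top], fun c hc hca => ?_⟩
        simp only [coe_insert, Set.mem_insert_iff, mem_coe] at hc
        rcases hc with rfl | hc
        · exact absurd rfl hca
        · rcases eq_or_ne c b with rfl | hcb
          · exact hab
          · exact trans_of P hab (hbtop c hc hcb)
      · exact absurd hbS ha
      · refine ⟨b, by simp [hbS], fun c hc hcb => ?_⟩
        simp only [coe_insert, Set.mem_insert_iff, mem_coe] at hc
        rcases hc with rfl | hc
        · exact hba
        · exact hbtop c hc hcb

noncomputable def theTop (P : PrefRel n) (S : Finset (Fin n)) (v : Fin n) : Fin n :=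
  if h : ∃ a, top P (↑S) a then h.choose else v

lemma theTop_spec {P : PrefRel n} (hP : IsStrictTotalOrder (Fin n) P)
    {S : Finset (Fin n)} (hS : S.Nonempty) (v : Fin n) :
    top P (↑S) (theTop P S v) := by
  rw [theTop, dif_pos (exists_top hP hS)]
  exact (exists_top hP hS).choose_spec

variable (Pr : Fin n → PrefRel n)

noncomputable def nextA (S : Finset (Fin n)) (v : Fin n) : Fin n := theTop (Pr v) S v

noncomputable def cyc (S : Finset (Fin n)) : Finset (Fin n) :=
  S.filter (fun v => ∃ m, 0 < m ∧ (nextA Pr S)^[m] v = v)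

noncomputable def layer : ℕ → Finset (Fin n)
  | 0 => Finset.univ
  | t+1 => layer t \ cyc Pr (layer t)

noncomputable def rnd (u : Fin n) : ℕ :=
  if h : ∃ t, u ∈ cyc Pr (layer Pr t) then Nat.find h else 0

noncomputable def nxt (u : Fin n) : Fin n := nextA Pr (layer Pr (rnd Pr u)) u

variable {Pr}
variable (hST : ∀ i, IsStrictTotalOrder (Fin n) (Pr i))
include hST

lemma nextA_mem {S : Finset (Fin n)} (hS : S.Nonempty) (v : Fin n) :
    nextA Pr S v ∈ S := by
  have := (theTop_spec (hST v) hS v).1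
  simpa [nextA] using this

lemma nextA_top {S : Finset (Fin n)} (hS : S.Nonempty) (v : Fin n) :
    top (Pr v) (↑S) (nextA Pr S v) := theTop_spec (hST v) hS v

omit hST in
lemma mem_cyc {S : Finset (Fin n)} {v : Fin n} :
    v ∈ cyc Pr S ↔ v ∈ S ∧ ∃ m, 0 < m ∧ (nextA Pr S)^[m] v = v := Finset.mem_filter

omit hST in
lemma cyc_subset {S : Finset (Fin n)} : cyc Pr S ⊆ S := Finset.filter_subset _ _

lemma cyc_next {S : Finset (Fin n)} {v : Fin n} (hv : v ∈ cyc Pr S) :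
    nextA Pr S v ∈ cyc Pr S := by
  obtain ⟨hvS, m, hm, hper⟩ := mem_cyc.1 hv
  have hS : S.Nonempty := ⟨v, hvS⟩
  refine mem_cyc.2 ⟨nextA_mem hST hS v, m, hm, ?_⟩
  calc (nextA Pr S)^[m] (nextA Pr S v) = (nextA Pr S)^[m+1] v := (Function.iterate_succ_apply _ _ _).symm
    _ = nextA Pr S ((nextA Pr S)^[m] v) := Function.iterate_succ_apply' _ _ _
    _ = nextA Pr S v := by rw [hper]

lemma cyc_nonempty {S : Finset (Fin n)} (hS : S.Nonempty) : (cyc Pr S).Nonempty := by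
  obtain ⟨u, hu⟩ := hS
  have hmaps : ∀ a ∈ Finset.range (n+1), (nextA Pr S)^[a+1] u ∈ S := by
    intro a _
    rw [Function.iterate_succ_apply']
    exact nextA_mem hST ⟨u, hu⟩ _
  have hcard : S.card < (Finset.range (n+1)).card := by
    rw [Finset.card_range]
    have h := Finset.card_le_univ S
    simp only [Finset.card_univ, Fintype.card_fin] at h
    omega
  obtain ⟨a, ha, b, hb, hab, heq⟩ := Finset.exists_ne_map_eq_of_card_lt_of_maps_to hcard hmaps
  wlog hlt : a < b generalizing a b
  · exact this b hb a ha hab.symm heq.symm (by omega)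
  refine ⟨(nextA Pr S)^[a+1] u, mem_cyc.2 ⟨hmaps a ha, b - a, by omega, ?_⟩⟩
  have : (nextA Pr S)^[b-a] ((nextA Pr S)^[a+1] u) = (nextA Pr S)^[b+1] u := by
    rw [← Function.iterate_add_apply]
    congr 1
    omega
  rw [this, ← heq]

omit hST in
lemma layer_succ_subset (t : ℕ) : layer Pr (t+1) ⊆ layer Pr t := by
  rw [layer]; exact Finset.sdiff_subset

omit hST in
lemma layer_antitone {t t' : ℕ} (h : t ≤ t') : layer Pr t' ⊆ layer Pr t := by
  induction t' with
  | zero => simpa [Nat.le_zero.1 h] using Finset.Subset.refl _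
  | succ t' ih =>
    rcases Nat.lt_or_ge t (t'+1) with h' | h'
    · exact (layer_succ_subset t').trans (ih (by omega))
    · have : t = t' + 1 := by omega
      simp [this]

lemma exists_rnd (u : Fin n) : ∃ t, u ∈ cyc Pr (layer Pr t) := by
  have hcard : ∀ t, u ∈ layer Pr t → (layer Pr t).card + t ≤ n := by
    intro t
    induction t with
    | zero =>
      intro _
      have h := Finset.card_le_univ (layer Pr 0)
      simpa using h
    | succ t ih =>
      intro hu
      have hut : u ∈ layer Pr t := layer_succ_subset t hu
      have h1 := ih hut
      have hne : (layer Pr t).Nonempty := ⟨u, hut⟩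
      have hcyc := cyc_nonempty hST hne
      have hsub : cyc Pr (layer Pr t) ⊆ layer Pr t := cyc_subset
      have : (layer Pr (t+1)).card < (layer Pr t).card := by
        rw [layer, Finset.card_sdiff_of_subset hsub]
        have : 0 < (cyc Pr (layer Pr t)).card := Finset.card_pos.2 hcyc
        have hle : (cyc Pr (layer Pr t)).card ≤ (layer Pr t).card := Finset.card_le_card hsub
        omega
      omega
  have hnot : u ∉ layer Pr (n+1) := by
    intro hu
    have := hcard (n+1) hu
    have : 0 < (layer Pr (n+1)).card := Finset.card_pos.2 ⟨u, hu⟩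
    omega
  have hex : ∃ t, u ∉ layer Pr t := ⟨n+1, hnot⟩
  have h0 : u ∈ layer Pr 0 := by simp [layer]
  set t0 := Nat.find hex with ht0
  have hspec : u ∉ layer Pr t0 := Nat.find_spec hex
  have hpos : t0 ≠ 0 := fun h => hspec (h ▸ h0)
  obtain ⟨t', ht'⟩ : ∃ t', t0 = t' + 1 := ⟨t0 - 1, by omega⟩
  have hmem : u ∈ layer Pr t' := by
    by_contra h
    have := Nat.find_le (h := hex) h
    omega
  refine ⟨t', ?_⟩
  by_contra h
  rw [ht'] at hspec
  exact hspec (by rw [layer, Finset.mem_sdiff]; exact ⟨hmem, h⟩)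

lemma rnd_spec (u : Fin n) : u ∈ cyc Pr (layer Pr (rnd Pr u)) := by
  rw [rnd, dif_pos (exists_rnd hST u)]
  exact Nat.find_spec (exists_rnd hST u)

lemma mem_layer_rnd (u : Fin n) : u ∈ layer Pr (rnd Pr u) := cyc_subset (rnd_spec hST u)

lemma not_mem_layer_rnd_succ (u : Fin n) : u ∉ layer Pr (rnd Pr u + 1) := by
  rw [layer, Finset.mem_sdiff]
  exact fun h => h.2 (rnd_spec hST u)

lemma rnd_eq_of_mem {u : Fin n} {t : ℕ} (h : u ∈ cyc Pr (layer Pr t)) : rnd Pr u = t := by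
  by_contra hne
  rcases Nat.lt_or_ge (rnd Pr u) t with hlt | hge
  · exact not_mem_layer_rnd_succ hST u (layer_antitone (by omega) (cyc_subset h))
  · have htlt : t < rnd Pr u := by omega
    have : u ∉ layer Pr (t+1) := by
      rw [layer, Finset.mem_sdiff]
      exact fun h' => h'.2 h
    exact this (layer_antitone (by omega) (mem_layer_rnd hST u))

lemma mem_layer_iff {u : Fin n} {t : ℕ} : u ∈ layer Pr t ↔ t ≤ rnd Pr u := by
  constructor
  · intro h
    by_contra hlt
    exact not_mem_layer_rnd_succ hST u (layer_antitone (by omega) h)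
  · intro h
    exact layer_antitone h (mem_layer_rnd hST u)

lemma nxt_mem_cyc (u : Fin n) : nxt Pr u ∈ cyc Pr (layer Pr (rnd Pr u)) :=
  cyc_next hST (rnd_spec hST u)

lemma rnd_nxt (u : Fin n) : rnd Pr (nxt Pr u) = rnd Pr u :=
  rnd_eq_of_mem hST (nxt_mem_cyc hST u)

lemma nxt_top (u : Fin n) : top (Pr u) (↑(layer Pr (rnd Pr u))) (nxt Pr u) :=
  nextA_top hST ⟨u, mem_layer_rnd hST u⟩ u

lemma nxt_injective : Function.Injective (nxt Pr) := by
  intro u v huv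
  have hsr : rnd Pr u = rnd Pr v := by
    rw [← rnd_nxt hST u, ← rnd_nxt hST v, huv]
  obtain ⟨-, a, ha, hpa⟩ := mem_cyc.1 (rnd_spec hST u)
  obtain ⟨-, b, hb, hpb⟩ := mem_cyc.1 (rnd_spec hST v)
  rw [← hsr] at hpb
  set F := nextA Pr (layer Pr (rnd Pr u)) with hF
  have hpa0 : Function.IsPeriodicPt F a u := hpa
  have hpb0 : Function.IsPeriodicPt F b v := hpb
  have hpa' : F^[a*b] u = u := hpa0.mul_const b
  have hpb' : F^[a*b] v = v := hpb0.const_mul a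
  have hFu : F u = nxt Pr u := rfl
  have hFv : F v = nxt Pr v := by
    rw [hF, nxt, hsr]
  have hab : 0 < a * b := by positivity
  calc u = F^[a*b] u := hpa'.symm
    _ = F^[a*b - 1] (F u) := by rw [← Function.iterate_succ_apply]; congr 1; omega
    _ = F^[a*b - 1] (F v) := by rw [hFu, hFv, huv]
    _ = F^[a*b] v := by rw [← Function.iterate_succ_apply]; congr 1; omega
    _ = v := hpb'

lemma nxt_surjective : Function.Surjective (nxt Pr) :=
  Finite.injective_iff_surjective.1 (nxt_injective hST)

end TTCaux

namespace TTCaux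

variable {n : ℕ} {D : Set (PrefRel n)}

noncomputable def pupd (R : Profile n (fun _ => D)) (i : Fin n) (q : PrefRel n) (hq : q ∈ D) :
    Profile n (fun _ => D) :=
  ⟨Function.update R.1 i q, fun j => by
    rcases eq_or_ne j i with rfl | h
    · simpa using hq
    · simpa [Function.update_of_ne h] using R.2 j⟩

lemma pupd_apply (R : Profile n (fun _ => D)) (i : Fin n) (q : PrefRel n) (hq : q ∈ D) (j : Fin n) :
    (pupd R i q hq).1 j = if j = i then q else R.1 j := by
  rcases eq_or_ne j i with rfl | h
  · simp [pupd]
  · simp [pupd, Function.update_of_ne h, h]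

theorem key (hD : ∀ P ∈ D, IsStrictTotalOrder (Fin n) P) (htt : topTwo D)
    (φ : Profile n (fun _ => D) → Fin n → Fin n)
    (hbij : ∀ P, Function.Bijective (φ P)) (hIR : IR φ) (hpe : PairEff φ) (hsp : SP φ) :
    ∀ k, 0 < k → ∀ (S : Finset (Fin n)) (c : ℕ → Fin n),
    (∀ j, c (j + k) = c j) →
    (∀ j j', j < k → j' < k → c j = c j' → j = j') →
    (∀ j, c j ∈ S) →
    ∀ (R : Profile n (fun _ => D)),
    (∀ j, top (R.1 (c j)) (↑S) (c (j+1))) →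
    (∀ R' : Profile n (fun _ => D), (∀ v, (∀ j, v ≠ c j) → R'.1 v = R.1 v) → ∀ j, φ R' (c j) ∈ S) →
    ∀ j, φ R (c j) = c (j+1) := by
  intro k
  induction k using Nat.strong_induction_on with
  | _ k IHk =>
  intro hk S c hper hinj hmem
  classical
  have c_add_mul : ∀ j m, c (j + k * m) = c j := by
    intro j m
    induction m with
    | zero => simp
    | succ m ih =>
      have h : j + k * (m+1) = (j + k * m) + k := by ring
      rw [h, hper, ih]
  have c_mod : ∀ j, c (j % k) = c j := by
    intro j
    conv_rhs => rw [show j = j % k + k * (j / k) from (Nat.mod_add_div j k).symm]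
    rw [c_add_mul]
  have c_modeq : ∀ a b, c a = c b → a % k = b % k := by
    intro a b h
    exact hinj _ _ (Nat.mod_lt _ hk) (Nat.mod_lt _ hk) (by rw [c_mod, c_mod, h])
  have c_congr : ∀ a b, a % k = b % k → c a = c b := by
    intro a b h
    rw [← c_mod a, ← c_mod b, h]
  have c_succ : ∀ a b, c a = c b → c (a+1) = c (b+1) := by
    intro a b h
    refine c_congr _ _ ?_
    have hm := c_modeq a b h
    rw [Nat.add_mod a 1 k, Nat.add_mod b 1 k, hm]
  have c_presucc : ∀ a b, c (a+1) = c (b+1) → c a = c b := by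
    intro a b h
    have hm : (a+1) % k = (b+1) % k := c_modeq _ _ h
    refine c_congr a b ?_
    have : a + 1 ≡ b + 1 [MOD k] := hm
    exact Nat.ModEq.add_right_cancel' 1 this
  rcases eq_or_lt_of_le (Nat.succ_le_of_lt hk) with heq1 | hk2
  · -- k = 1
    rcases heq1 with rfl
    intro R htops hCL j
    have hself : c (j+1) = c j := hper j
    have hw : φ R (c j) ∈ S := hCL R (fun v _ => rfl) j
    rcases hIR R (c j) with h0 | h0
    · rw [h0]; exact hself.symm
    · rcases eq_or_ne (φ R (c j)) (c (j+1)) with he | hne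
      · exact he
      · exfalso
        have h1 := (htops j).2 _ (Finset.mem_coe.2 hw) hne
        rw [hself] at h1
        exact asym_of (hD _ (R.2 (c j))) h1 h0
  · -- k ≥ 2
    have cne : ∀ j, c j ≠ c (j+1) := by
      intro j he
      have h := c_modeq _ _ he
      have h1' : 1 % k = 1 := Nat.mod_eq_of_lt hk2
      have h2 : (j+1) % k = (j % k + 1) % k := by
        conv_lhs => rw [Nat.add_mod j 1 k, h1']
      rcases Nat.lt_or_ge (j % k + 1) k with hlt | hge
      · rw [Nat.mod_eq_of_lt hlt] at h2; omega
      · have hjk : j % k < k := Nat.mod_lt _ (by omega)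
        have hke : j % k + 1 = k := by omega
        rw [hke, Nat.mod_self] at h2
        omega
    have ownornext : ∀ (R : Profile n (fun _ => D)),
        (∀ R' : Profile n (fun _ => D), (∀ v, (∀ j, v ≠ c j) → R'.1 v = R.1 v) → ∀ j, φ R' (c j) ∈ S) →
        ∀ j, top (R.1 (c j)) ((↑S : Set (Fin n)) \ {c (j+1)}) (c j) →
        φ R (c j) = c j ∨ φ R (c j) = c (j+1) := by
      intro R hCL j htr
      have hw : φ R (c j) ∈ S := hCL R (fun v _ => rfl) j
      rcases hIR R (c j) with h0 | h0
      · exact Or.inl h0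
      · right
        by_contra hne
        have hwj : φ R (c j) ≠ c j := by
          intro he
          rw [he] at h0
          exact asym_of (hD _ (R.2 (c j))) h0 h0
        have h1 := htr.2 (φ R (c j)) ⟨Finset.mem_coe.2 hw, by simpa using hne⟩ hwj
        exact asym_of (hD _ (R.2 (c j))) h1 h0
    have closure : ∀ (R : Profile n (fun _ => D)),
        (∀ j, φ R (c j) = c j ∨ φ R (c j) = c (j+1)) →
        ∀ j0, φ R (c j0) = c j0 → ∀ j, φ R (c j) = c j := by
      intro R h2 j0 hj0
      have step : ∀ j, φ R (c j) = c j → φ R (c (j+1)) = c (j+1) := by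
        intro j hj
        set T := (Finset.range k).image c with hT
        have himg : T.image (φ R) = T := by
          apply Finset.eq_of_subset_of_card_le
          · intro b hb
            obtain ⟨a, ha, rfl⟩ := Finset.mem_image.1 hb
            obtain ⟨i, _, rfl⟩ := Finset.mem_image.1 ha
            rcases h2 i with h | h
            · rw [h]; exact ha
            · rw [h, ← c_mod (i+1)]
              exact Finset.mem_image.2 ⟨(i+1) % k, Finset.mem_range.2 (Nat.mod_lt _ (by omega)), rfl⟩
          · rw [Finset.card_image_of_injective _ (hbij R).1]
        have hmemT : c (j+1) ∈ T := by
          rw [← c_mod (j+1)]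
          exact Finset.mem_image.2 ⟨(j+1) % k, Finset.mem_range.2 (Nat.mod_lt _ (by omega)), rfl⟩
        rw [← himg] at hmemT
        obtain ⟨a, ha, hae⟩ := Finset.mem_image.1 hmemT
        obtain ⟨i, _, rfl⟩ := Finset.mem_image.1 ha
        rcases h2 i with h | h
        · have he : c i = c (j+1) := h.symm.trans hae
          rw [← he]
          exact h
        · have h1 : c (i+1) = c (j+1) := h.symm.trans hae
          have h0 : c i = c j := c_presucc _ _ h1
          rw [h0, hj] at h
          exact absurd (h.trans h1) (cne j)
      have hd : ∀ d, φ R (c (j0 + d)) = c (j0 + d) := by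
        intro d
        induction d with
        | zero => exact hj0
        | succ d ih => exact step _ ih
      intro j
      have hrep : c (j0 + (j + (k - j0 % k))) = c j := by
        apply c_congr
        have h1 : j0 % k ≤ j0 := Nat.mod_le _ _
        have h2 : j0 % k < k := Nat.mod_lt _ (by omega)
        have h3 : j0 + (j + (k - j0 % k)) = j + (k * (j0 / k) + k) := by
          have := Nat.mod_add_div j0 k
          omega
        rw [h3]
        have h4 : j + (k * (j0/k) + k) = j + k * (j0/k + 1) := by ring
        rw [h4, Nat.add_mul_mod_self_left]
      rw [← hrep]
      exact hd _
    suffices main : ∀ m (R : Profile n (fun _ => D)),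
        (∀ j, top (R.1 (c j)) (↑S) (c (j+1))) →
        (∀ R' : Profile n (fun _ => D), (∀ v, (∀ j, v ≠ c j) → R'.1 v = R.1 v) → ∀ j, φ R' (c j) ∈ S) →
        (((Finset.range k).filter (fun j => ¬ top (R.1 (c j)) ((↑S : Set (Fin n)) \ {c (j+1)}) (c j))).card ≤ m) →
        ∀ j, φ R (c j) = c (j+1) by
      intro R htops hCL
      exact main _ R htops hCL le_rfl
    intro m
    induction m with
    | zero =>
      intro R htops hCL hcard
      have htrunc : ∀ j, top (R.1 (c j)) ((↑S : Set (Fin n)) \ {c (j+1)}) (c j) := by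
        intro j
        have hjk : j % k ∈ Finset.range k := Finset.mem_range.2 (Nat.mod_lt _ (by omega))
        have hrangetr : ∀ j' ∈ Finset.range k, top (R.1 (c j')) ((↑S : Set (Fin n)) \ {c (j'+1)}) (c j') := by
          intro j' hj'
          by_contra hno
          have hmem' : j' ∈ (Finset.range k).filter (fun j => ¬ top (R.1 (c j)) ((↑S : Set (Fin n)) \ {c (j+1)}) (c j)) :=
            Finset.mem_filter.2 ⟨hj', hno⟩
          have := Finset.card_pos.2 ⟨j', hmem'⟩
          omega
        have h := hrangetr _ hjk
        have hs : c (j % k + 1) = c (j+1) := c_succ _ _ (c_mod j)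
        rw [c_mod j, hs] at h
        exact h
      have h2 : ∀ j, φ R (c j) = c j ∨ φ R (c j) = c (j+1) :=
        fun j => ownornext R hCL j (htrunc j)
      by_cases hex : ∃ j0, φ R (c j0) = c j0
      · exfalso
        obtain ⟨j0, hj0⟩ := hex
        have hall : ∀ j, φ R (c j) = c j := closure R h2 j0 hj0
        rcases Nat.lt_or_ge k 3 with hklt | hk3
        · -- k = 2
          have hk2' : k = 2 := by omega
          have h20 : c 2 = c 0 := by
            have h := hper 0
            rw [hk2'] at h
            exact h
          refine hpe R (c 0) (c 1) ⟨?_, ?_⟩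
          · rw [hall 1, hall 0]
            exact (htops 0).2 (c 0) (Finset.mem_coe.2 (hmem 0)) (cne 0)
          · rw [hall 0, hall 1]
            have h := (htops 1).2 (c 1) (Finset.mem_coe.2 (hmem 1)) (cne 1)
            rw [h20] at h
            exact h
        · -- k ≥ 3
          have hSne : (↑S : Set (Fin n)).Nonempty := ⟨c 0, Finset.mem_coe.2 (hmem 0)⟩
          have hne12 : c 1 ≠ c 2 := cne 1
          have hne20 : c 2 ≠ c 0 := by
            intro he
            have h := c_modeq _ _ he
            rw [Nat.mod_eq_of_lt (by omega), Nat.mod_eq_of_lt (by omega)] at h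
            omega
          have hatt1 : ∃ P ∈ D, top P (↑S) (c 1) := ⟨R.1 (c 0), R.2 (c 0), htops 0⟩
          have hatt2 : ∃ P ∈ D, top P (↑S) (c 2) := ⟨R.1 (c 1), R.2 (c 1), htops 1⟩
          have hatt0 : ∃ P ∈ D, top P (↑S) (c 0) := by
            refine ⟨R.1 (c (k-1)), R.2 (c (k-1)), ?_⟩
            have h := htops (k-1)
            have he : c (k-1+1) = c 0 := by
              have h0 : k - 1 + 1 = 0 + k := by omega
              rw [h0, hper 0]
            rw [he] at h
            exact h
          obtain ⟨X, hXD, hX1, hX2⟩ := htt (↑S) hSne (c 1) (c 2) (Finset.mem_coe.2 (hmem 1))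
            (Finset.mem_coe.2 (hmem 2)) hne12 hatt1 hatt2
          obtain ⟨Y, hYD, hY1, hY2⟩ := htt (↑S) hSne (c 2) (c 0) (Finset.mem_coe.2 (hmem 2))
            (Finset.mem_coe.2 (hmem 0)) hne20 hatt2 hatt0
          set M := pupd R (c 0) X hXD with hM
          set MY := pupd R (c 0) Y hYD with hMY
          set k' := k - 1 with hk'
          have hk'2 : 2 ≤ k' := by omega
          set c' : ℕ → Fin n := fun j => if j % k' = 0 then c 0 else c (j % k' + 1) with hc'
          have hper' : ∀ j, c' (j + k') = c' j := by
            intro j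
            simp only [hc', Nat.add_mod_right]
          have hinj' : ∀ a b, a < k' → b < k' → c' a = c' b → a = b := by
            intro a b ha hb hab
            simp only [hc', Nat.mod_eq_of_lt ha, Nat.mod_eq_of_lt hb] at hab
            by_cases ha0 : a = 0 <;> by_cases hb0 : b = 0
            · omega
            · rw [if_pos ha0, if_neg hb0] at hab
              exact absurd (hinj 0 (b+1) (by omega) (by omega) hab) (by omega)
            · rw [if_neg ha0, if_pos hb0] at hab
              exact absurd (hinj (a+1) 0 (by omega) (by omega) hab) (by omega)
            · rw [if_neg ha0, if_neg hb0] at hab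
              have := hinj (a+1) (b+1) (by omega) (by omega) hab
              omega
          have hmem' : ∀ j, c' j ∈ S := by
            intro j
            simp only [hc']
            split
            · exact hmem 0
            · exact hmem _
          have hmodsucc : ∀ j, (j+1) % k' = (if j % k' = k' - 1 then 0 else j % k' + 1) := by
            intro j
            have h1' : 1 % k' = 1 := Nat.mod_eq_of_lt (by omega)
            have h1 : (j+1) % k' = (j % k' + 1) % k' := by
              conv_lhs => rw [Nat.add_mod j 1 k', h1']
            by_cases hcnd : j % k' = k' - 1
            · rw [if_pos hcnd, h1, hcnd]
              have he : k' - 1 + 1 = k' := by omega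
              rw [he, Nat.mod_self]
            · rw [if_neg hcnd, h1]
              have hlt : j % k' < k' := Nat.mod_lt _ (by omega)
              exact Nat.mod_eq_of_lt (by omega)
          have htops' : ∀ j, top (MY.1 (c' j)) (↑S) (c' (j+1)) := by
            intro j
            have hjr : j % k' < k' := Nat.mod_lt _ (by omega)
            by_cases h0 : j % k' = 0
            · have hcj : c' j = c 0 := by simp [hc', h0]
              have hMYj : MY.1 (c' j) = Y := by
                rw [hcj, hMY, pupd_apply, if_pos rfl]
              have hj1 : (j+1) % k' = 1 := by
                rw [hmodsucc j, if_neg (by omega), h0]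
              have hcj1 : c' (j+1) = c 2 := by
                simp [hc', hj1]
              rw [hMYj, hcj1]
              exact hY1
            · have hcj : c' j = c (j % k' + 1) := by simp [hc', h0]
              have hne0 : c (j % k' + 1) ≠ c 0 := by
                intro he
                have := hinj (j % k' + 1) 0 (by omega) (by omega) he
                omega
              have hMYj : MY.1 (c' j) = R.1 (c (j % k' + 1)) := by
                rw [hcj, hMY, pupd_apply, if_neg hne0]
              have hgoal : c' (j+1) = c (j % k' + 1 + 1) := by
                by_cases hc2 : j % k' = k' - 1
                · have h1 : (j+1) % k' = 0 := by rw [hmodsucc j, if_pos hc2]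
                  have he : c' (j+1) = c 0 := by simp [hc', h1]
                  rw [he]
                  have h2 : j % k' + 1 + 1 = 0 + k := by omega
                  rw [h2, hper 0]
                · have h1 : (j+1) % k' = j % k' + 1 := by rw [hmodsucc j, if_neg hc2]
                  simp [hc', h1]
              rw [hMYj, hgoal]
              exact htops (j % k' + 1)
          have hCL' : ∀ R'' : Profile n (fun _ => D),
              (∀ v, (∀ j, v ≠ c' j) → R''.1 v = MY.1 v) → ∀ j, φ R'' (c' j) ∈ S := by
            intro R'' hagree j
            have hagree' : ∀ v, (∀ j, v ≠ c j) → R''.1 v = R.1 v := by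
              intro v hv
              have hvc' : ∀ j2, v ≠ c' j2 := by
                intro j2
                simp only [hc']
                split
                · exact hv 0
                · exact hv _
              rw [hagree v hvc', hMY, pupd_apply, if_neg (hv 0)]
            have hall' := hCL R'' hagree'
            simp only [hc']
            split
            · exact hall' 0
            · exact hall' _
          have hkey := IHk k' (by omega) (by omega) S c' hper' hinj' hmem' MY htops' hCL'
          have hMY0 : φ MY (c 0) = c 2 := by
            have h := hkey 0
            have h0 : c' 0 = c 0 := by simp [hc']
            have h1 : c' 1 = c 2 := by
              have he : (1 : ℕ) % k' = 1 := Nat.mod_eq_of_lt (by omega)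
              simp [hc', he]
            rw [h0, h1] at h
            exact h
          have hMextra : ∀ v, v ≠ c 0 → MY.1 v = M.1 v := by
            intro v hv
            rw [hMY, hM, pupd_apply, pupd_apply, if_neg hv, if_neg hv]
          have hwM : φ M (c 0) ∈ S :=
            hCL M (fun v hv => by rw [hM, pupd_apply, if_neg (hv 0)]) 0
          have hM0 : M.1 (c 0) = X := by rw [hM, pupd_apply, if_pos rfl]
          have hspM := hsp M MY (c 0) hMextra
          have hwM23 : φ M (c 0) = c 1 ∨ φ M (c 0) = c 2 := by
            rcases hspM with h | h
            · right; rw [h, hMY0]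
            · rw [hM0, hMY0] at h
              by_cases h1 : φ M (c 0) = c 1
              · exact Or.inl h1
              · right
                by_contra h2
                have h3 := hX2.2 (φ M (c 0)) ⟨Finset.mem_coe.2 hwM, by simpa using h1⟩ h2
                exact asym_of (hD X hXD) h3 h
          have hspR := hsp R M (c 0) (fun v hv => by rw [hM, pupd_apply, if_neg hv])
          have hwM2 : φ M (c 0) = c 2 := by
            rcases hwM23 with h1 | h2
            · exfalso
              rcases hspR with h | h
              · rw [hall 0, h1] at h
                exact cne 0 h
              · rw [hall 0, h1] at h
                have h3 := (htops 0).2 (c 0) (Finset.mem_coe.2 (hmem 0)) (cne 0)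
                exact asym_of (hD _ (R.2 (c 0))) h3 h
            · exact h2
          have hw1 : φ M (c 1) ∈ S :=
            hCL M (fun v hv => by rw [hM, pupd_apply, if_neg (hv 0)]) 1
          have hne10 : c 1 ≠ c 0 := by
            intro he
            exact absurd (hinj 1 0 (by omega) (by omega) he) (by omega)
          have hM1 : M.1 (c 1) = R.1 (c 1) := by
            rw [hM, pupd_apply, if_neg hne10]
          have hφM1 : φ M (c 1) = c 1 := by
            rcases hIR M (c 1) with h | h
            · exact h
            · exfalso
              rw [hM1] at h
              have htr := htrunc 1
              have hne1 : φ M (c 1) ≠ c 1 := by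
                intro he
                rw [he] at h
                exact asym_of (hD _ (R.2 (c 1))) h h
              by_cases he2 : φ M (c 1) = c 2
              · have heq := (hbij M).1 (he2.trans hwM2.symm)
                exact absurd (hinj 1 0 (by omega) (by omega) heq) (by omega)
              · have h3 := htr.2 (φ M (c 1)) ⟨Finset.mem_coe.2 hw1, by simpa using he2⟩ hne1
                exact asym_of (hD _ (R.2 (c 1))) h3 h
          refine hpe M (c 0) (c 1) ⟨?_, ?_⟩
          · rw [hφM1, hwM2, hM0]
            exact hX1.2 (c 2) (Finset.mem_coe.2 (hmem 2)) hne12.symm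
          · rw [hwM2, hφM1, hM1]
            exact (htops 1).2 (c 1) (Finset.mem_coe.2 (hmem 1)) (cne 1)
      · push_neg at hex
        intro j
        rcases h2 j with h | h
        · exact absurd h (hex j)
        · exact h
    | succ m IHm =>
      intro R htops hCL hcard
      by_cases hallm : (((Finset.range k).filter (fun j => ¬ top (R.1 (c j)) ((↑S : Set (Fin n)) \ {c (j+1)}) (c j))).card ≤ m)
      · exact IHm R htops hCL hallm
      have hnext : ∀ s, s < k → ¬ top (R.1 (c s)) ((↑S : Set (Fin n)) \ {c (s+1)}) (c s) →
          φ R (c s) = c (s+1) := by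
        intro s hsk hnt
        have hSne : (↑S : Set (Fin n)).Nonempty := ⟨c 0, Finset.mem_coe.2 (hmem 0)⟩
        have hatta : ∃ P ∈ D, top P (↑S) (c (s+1)) := ⟨R.1 (c s), R.2 (c s), htops s⟩
        have hattb : ∃ P ∈ D, top P (↑S) (c s) := by
          refine ⟨R.1 (c (s + k - 1)), R.2 (c (s + k - 1)), ?_⟩
          have h := htops (s + k - 1)
          have he : c (s + k - 1 + 1) = c s := by
            have h0 : s + k - 1 + 1 = s + k := by omega
            rw [h0, hper s]
          rw [he] at h
          exact h
        obtain ⟨Q, hQD, hQ1, hQ2⟩ := htt (↑S) hSne (c (s+1)) (c s) (Finset.mem_coe.2 (hmem (s+1)))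
          (Finset.mem_coe.2 (hmem s)) (Ne.symm (cne s)) hatta hattb
        set R' := pupd R (c s) Q hQD with hR'
        have htops'' : ∀ j, top (R'.1 (c j)) (↑S) (c (j+1)) := by
          intro j
          by_cases hcj : c j = c s
          · rw [hcj, c_succ j s hcj, hR', pupd_apply, if_pos rfl]
            exact hQ1
          · rw [hR', pupd_apply, if_neg hcj]
            exact htops j
        have hCL'' : ∀ R'' : Profile n (fun _ => D),
            (∀ v, (∀ j, v ≠ c j) → R''.1 v = R'.1 v) → ∀ j, φ R'' (c j) ∈ S := by
          intro R'' hagree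
          refine hCL R'' (fun v hv => ?_)
          rw [hagree v hv, hR', pupd_apply, if_neg (hv s)]
        have hcard'' : (((Finset.range k).filter
            (fun j => ¬ top (R'.1 (c j)) ((↑S : Set (Fin n)) \ {c (j+1)}) (c j))).card ≤ m) := by
          have hsub : ((Finset.range k).filter
              (fun j => ¬ top (R'.1 (c j)) ((↑S : Set (Fin n)) \ {c (j+1)}) (c j))) ⊆
              ((Finset.range k).filter
              (fun j => ¬ top (R.1 (c j)) ((↑S : Set (Fin n)) \ {c (j+1)}) (c j))).erase s := by
            intro j hj
            obtain ⟨hjr, hnt'⟩ := Finset.mem_filter.1 hj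
            by_cases hcj : c j = c s
            · exfalso
              apply hnt'
              rw [hcj, c_succ j s hcj, hR', pupd_apply, if_pos rfl]
              exact hQ2
            · refine Finset.mem_erase.2 ⟨?_, Finset.mem_filter.2 ⟨hjr, ?_⟩⟩
              · intro he
                exact hcj (by rw [he])
              · intro htr
                apply hnt'
                rw [hR', pupd_apply, if_neg hcj]
                exact htr
          have hsmem : s ∈ ((Finset.range k).filter
              (fun j => ¬ top (R.1 (c j)) ((↑S : Set (Fin n)) \ {c (j+1)}) (c j))) :=
            Finset.mem_filter.2 ⟨Finset.mem_range.2 hsk, hnt⟩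
          have hle := Finset.card_le_card hsub
          rw [Finset.card_erase_of_mem hsmem] at hle
          omega
        have hR'val := IHm R' htops'' hCL'' hcard'' s
        have hspR := hsp R R' (c s) (fun v hv => by rw [hR', pupd_apply, if_neg hv])
        rcases hspR with h | h
        · rw [h, hR'val]
        · rw [hR'val] at h
          by_cases he : φ R (c s) = c (s+1)
          · exact he
          · exfalso
            have hw : φ R (c s) ∈ S := hCL R (fun v _ => rfl) s
            have h3 := (htops s).2 _ (Finset.mem_coe.2 hw) he
            exact asym_of (hD _ (R.2 (c s))) h3 h
      have h2 : ∀ j, φ R (c j) = c j ∨ φ R (c j) = c (j+1) := by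
        intro j
        by_cases htr : top (R.1 (c j)) ((↑S : Set (Fin n)) \ {c (j+1)}) (c j)
        · exact ownornext R hCL j htr
        · right
          have hjk : j % k < k := Nat.mod_lt _ (by omega)
          have hnt' : ¬ top (R.1 (c (j % k))) ((↑S : Set (Fin n)) \ {c (j % k + 1)}) (c (j % k)) := by
            intro hco
            apply htr
            rw [c_mod j, c_succ _ _ (c_mod j)] at hco
            exact hco
          have h := hnext (j % k) hjk hnt'
          rw [c_mod j, c_succ _ _ (c_mod j)] at h
          exact h
      by_cases hex : ∃ j0, φ R (c j0) = c j0
      · exfalso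
        obtain ⟨j0, hj0⟩ := hex
        have hall := closure R h2 j0 hj0
        have hpos : 0 < (((Finset.range k).filter
            (fun j => ¬ top (R.1 (c j)) ((↑S : Set (Fin n)) \ {c (j+1)}) (c j))).card) := by omega
        obtain ⟨s, hs⟩ := Finset.card_pos.1 hpos
        obtain ⟨hsr, hnt⟩ := Finset.mem_filter.1 hs
        have h := hnext s (Finset.mem_range.1 hsr) hnt
        rw [hall s] at h
        exact cne s h
      · push_neg at hex
        intro j
        rcases h2 j with h | h
        · exact absurd h (hex j)
        · exact h

end TTCaux

namespace TTCaux

variable {n : ℕ} {D : Set (PrefRel n)}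

theorem freeze (hD : ∀ P ∈ D, IsStrictTotalOrder (Fin n) P) (htt : topTwo D)
    (φ : Profile n (fun _ => D) → Fin n → Fin n)
    (hbij : ∀ P, Function.Bijective (φ P)) (hIR : IR φ) (hpe : PairEff φ) (hsp : SP φ) :
    ∀ t : ℕ, ∀ R G : Profile n (fun _ => D),
    (∀ u, rnd R.1 u < t → top (G.1 u) (↑(layer R.1 (rnd R.1 u))) (nxt R.1 u)) →
    ∀ u, rnd R.1 u < t → φ G u = nxt R.1 u := by
  intro t
  induction t using Nat.strong_induction_on with
  | _ t IHt =>
  intro R G hG u hu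
  have hST : ∀ i, IsStrictTotalOrder (Fin n) (R.1 i) := fun i => hD _ (R.2 i)
  set s := rnd R.1 u with hs
  set S := layer R.1 s with hSdef
  set F := nextA R.1 S with hF
  have hu_cyc : u ∈ cyc R.1 S := rnd_spec hST u
  obtain ⟨huS, m, hm, hper_u⟩ := mem_cyc.1 hu_cyc
  set k := Function.minimalPeriod F u with hkdef
  have hk : 0 < k := Function.IsPeriodicPt.minimalPeriod_pos hm hper_u
  set c : ℕ → Fin n := fun j => F^[j] u with hc
  have hcyc : ∀ j, c j ∈ cyc R.1 S := by
    intro j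
    induction j with
    | zero => exact hu_cyc
    | succ j ih =>
      have he : c (j+1) = F (c j) := Function.iterate_succ_apply' F j u
      rw [he]
      exact cyc_next hST ih
  have hrndc : ∀ j, rnd R.1 (c j) = s := fun j => rnd_eq_of_mem hST (hcyc j)
  have hnxtc : ∀ j, nxt R.1 (c j) = c (j+1) := by
    intro j
    have h1 : nxt R.1 (c j) = nextA R.1 (layer R.1 (rnd R.1 (c j))) (c j) := rfl
    rw [h1, hrndc j]
    exact (Function.iterate_succ_apply' F j u).symm
  have hkeq : F^[k] u = u := Function.isPeriodicPt_minimalPeriod F u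
  have hper : ∀ j, c (j + k) = c j := by
    intro j
    show F^[j + k] u = F^[j] u
    rw [Function.iterate_add_apply, hkeq]
  have hinj : ∀ a b, a < k → b < k → c a = c b → a = b := by
    intro a b ha hb hab
    exact Function.iterate_injOn_Iio_minimalPeriod (Set.mem_Iio.2 ha) (Set.mem_Iio.2 hb) hab
  have hmemS : ∀ j, c j ∈ S := fun j => cyc_subset (hcyc j)
  have htopsG : ∀ j, top (G.1 (c j)) (↑S) (c (j+1)) := by
    intro j
    have h := hG (c j) (by rw [hrndc j]; exact hu)
    rw [hrndc j, hnxtc j] at h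
    exact h
  have hCL : ∀ R'' : Profile n (fun _ => D), (∀ v, (∀ j, v ≠ c j) → R''.1 v = G.1 v) →
      ∀ j, φ R'' (c j) ∈ S := by
    intro R'' hagree j
    have hG'' : ∀ v, rnd R.1 v < s → top (R''.1 v) (↑(layer R.1 (rnd R.1 v))) (nxt R.1 v) := by
      intro v hv
      have hvne : ∀ j2, v ≠ c j2 := by
        intro j2 he
        rw [he, hrndc j2] at hv
        omega
      rw [hagree v hvne]
      exact hG v (by omega)
    have hfr := IHt s hu R R'' hG''
    by_contra hnot
    have hrw : rnd R.1 (φ R'' (c j)) < s := by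
      by_contra hge
      push_neg at hge
      exact hnot ((mem_layer_iff hST).2 hge)
    obtain ⟨v, hv⟩ := nxt_surjective hST (φ R'' (c j))
    have hrv : rnd R.1 v < s := by
      have h1 := rnd_nxt hST v
      rw [hv] at h1
      omega
    have h2 := hfr v hrv
    rw [hv] at h2
    have heq := (hbij R'').1 h2
    rw [heq, hrndc j] at hrv
    omega
  have hkey := key hD htt φ hbij hIR hpe hsp k hk S c hper hinj hmemS G htopsG hCL 0
  have hc0 : c 0 = u := rfl
  rw [← hc0]
  rw [hkey]
  exact (hnxtc 0).symm

end TTCaux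


theorem stmt12 {n : ℕ} (D : Set (PrefRel n)) (hD : ∀ P ∈ D, IsStrictTotalOrder (Fin n) P)
    (htt : topTwo D) (φ : Profile n (fun _ => D) → Fin n → Fin n)
    (hbij : ∀ P, Function.Bijective (φ P))
    (hIR : IR φ) (hpe : PairEff φ) (hsp : SP φ) :
    ∀ P : Profile n (fun _ => D), isTTC P.1 (φ P) := by
  intro P
  have hST : ∀ i, IsStrictTotalOrder (Fin n) (P.1 i) := fun i => hD _ (P.2 i)
  have hφ : ∀ u, φ P u = TTCaux.nxt P.1 u := by
    intro u
    refine TTCaux.freeze hD htt φ hbij hIR hpe hsp (TTCaux.rnd P.1 u + 1) P P ?_ u (Nat.lt_succ_self _)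
    intro v _
    exact TTCaux.nxt_top hST v
  refine ⟨hbij P, TTCaux.rnd P.1, fun i => ⟨?_, ?_⟩⟩
  · rw [hφ i]
    exact TTCaux.rnd_nxt hST i
  · intro o hro hne
    have ho : o ∈ TTCaux.layer P.1 (TTCaux.rnd P.1 i) := (TTCaux.mem_layer_iff hST).2 hro
    have htop := TTCaux.nxt_top hST i
    rw [hφ i]
    refine htop.2 o (Finset.mem_coe.2 ho) ?_
    rw [hφ i] at hne
    exact hne
end

section
/- Let S be a set of agents forming a trading cycle, with preferences P'_{i_s} ranking the next agent's endowment first and their own endowment second (i_s most prefers o_{i_{s+1}}, with o_{i_s} second, indices cyclic in S). If a mechanism φ on D^N is individually rational, pair efficient, and strategyproof on a domain satisfying the top-two condition, then at the profile (P'_S, P_{-S}) each agent i_s in S receives o_{i_{s+1}} (the cycle is executed), and in particular it is impossible that every agent in S receives their own endowment. -/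
-- helpers
lemma fin_val_one {m : ℕ} [NeZero m] (h : 2 ≤ m) : (1 : Fin m).val = 1 := by
  rw [Fin.val_one']; exact Nat.mod_eq_of_lt (by omega)

lemma fin_mk_add_one {m a : ℕ} [NeZero m] (hm : 2 ≤ m) (ha : a + 1 < m) :
    (⟨a, by omega⟩ : Fin m) + 1 = ⟨a + 1, ha⟩ := by
  apply Fin.ext
  rw [Fin.add_def]
  simp [fin_val_one hm]
  exact Nat.mod_eq_of_lt ha

lemma fin_mk_last_add_one {m : ℕ} [NeZero m] (hm : 2 ≤ m) :
    (⟨m - 1, Nat.sub_lt (by omega) one_pos⟩ : Fin m) + 1 = 0 := by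
  apply Fin.ext
  rw [Fin.add_def]
  simp only [fin_val_one hm]
  have h1 : m - 1 + 1 = m := by omega
  rw [h1, Nat.mod_self]
  simp

lemma asym_of {n : ℕ} {Pr : PrefRel n} (hst : IsStrictTotalOrder (Fin n) Pr)
    {a b : Fin n} (h1 : Pr a b) (h2 : Pr b a) : False := by
  haveI := hst
  exact irrefl_of Pr a (trans_of Pr h1 h2)

lemma two_opts {n : ℕ} {Pr : PrefRel n} (hst : IsStrictTotalOrder (Fin n) Pr)
    {b c x : Fin n} (h1 : top Pr Set.univ b) (h2 : top Pr (Set.univ \ {b}) c)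
    (hx : Pr x c) : x = b := by
  haveI := hst
  by_contra hxb
  have hxc : x ≠ c := by rintro rfl; exact irrefl_of Pr x hx
  exact asym_of hst hx (h2.2 x ⟨Set.mem_univ _, hxb⟩ hxc)

open Fin.NatCast in
set_option maxHeartbeats 2000000 in
theorem cycle_lemma {n : ℕ} (D : Set (PrefRel n))
    (hD : ∀ P ∈ D, IsStrictTotalOrder (Fin n) P) (htt : topTwo D)
    (φ : Profile n (fun _ => D) → Fin n → Fin n)
    (hbij : ∀ P, Function.Bijective (φ P))
    (hIR : IR φ) (hpe : PairEff φ) (hsp : SP φ) :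
    ∀ m : ℕ, ∀ _ : NeZero m, ∀ i : Fin m → Fin n, Function.Injective i →
    ∀ P : Profile n (fun _ => D),
      (∀ s : Fin m, top (P.1 (i s)) Set.univ (i (s + 1)) ∧
        top (P.1 (i s)) (Set.univ \ {i (s + 1)}) (i s)) →
      ∀ s : Fin m, φ P (i s) = i (s + 1) := by
  intro m
  induction m using Nat.strong_induction_on with
  | _ m IH =>
  intro hNZ i hi P hP s
  haveI := hNZ
  rcases Nat.lt_or_ge m 2 with hm | hm2
  · -- m = 0 or m = 1
    interval_cases m
    · exact s.elim0
    · -- m = 1 : hP is contradictory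
      exfalso
      have := (hP 0).2.1
      have h01 : (0 + 1 : Fin 1) = 0 := rfl
      rw [h01] at this
      exact this.2 rfl
  have hval1 : (1 : Fin m).val = 1 := fin_val_one hm2
  have succ_ne : ∀ t : Fin m, t + 1 ≠ t := by
    intro t h
    have h' : t + 1 = t + 0 := by rw [h, add_zero]
    have h1 : (1 : Fin m) = 0 := by exact add_left_cancel h'
    have := congrArg Fin.val h1
    rw [hval1] at this
    simp at this
  have opts : ∀ P' : Profile n (fun _ => D),
      (∀ t : Fin m, top (P'.1 (i t)) Set.univ (i (t + 1)) ∧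
        top (P'.1 (i t)) (Set.univ \ {i (t + 1)}) (i t)) →
      ∀ t, φ P' (i t) = i t ∨ φ P' (i t) = i (t + 1) := by
    intro P' hP' t
    rcases hIR P' (i t) with h | h
    · exact Or.inl h
    · exact Or.inr (two_opts (hD _ (P'.2 (i t))) (hP' t).1 (hP' t).2 h)
  -- Step 1: not everyone keeps their endowment
  have hknot : ¬ (∀ t, φ P (i t) = i t) := by
    intro hk
    rcases Nat.lt_or_ge m 3 with hm3 | hm3
    · -- m = 2 : pair efficiency directly
      have hm2' : m = 2 := by omega
      subst hm2'
      have h01 : (0 + 1 : Fin 2) = 1 := rfl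
      have h10 : (1 + 1 : Fin 2) = 0 := rfl
      have hne : i 0 ≠ i 1 := fun h => by
        have := hi h
        exact absurd (congrArg Fin.val this) (by norm_num)
      apply hpe P (i 0) (i 1)
      constructor
      · rw [hk 0, hk 1]
        have := (hP 0).1.2 (i 0) (Set.mem_univ _) (by rw [h01]; exact hne)
        rwa [h01] at this
      · rw [hk 0, hk 1]
        have := (hP 1).1.2 (i 1) (Set.mem_univ _) (by rw [h10]; exact hne.symm)
        rwa [h10] at this
    · -- m ≥ 3 : shrink the cycle
      set p : Fin m := ⟨m - 1, by omega⟩ with hpdef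
      set q : Fin m := ⟨m - 2, by omega⟩ with hqdef
      set q' : Fin m := ⟨m - 3, by omega⟩ with hq'def
      have hp1 : p + 1 = 0 := by
        have := fin_mk_last_add_one (m := m) hm2
        rw [hpdef]; convert this using 2 <;> simp
      have hq1 : q + 1 = p := by
        rw [hqdef, hpdef, fin_mk_add_one hm2 (by omega)]
        congr 1; omega
      have hq'1 : q' + 1 = q := by
        rw [hq'def, hqdef, fin_mk_add_one hm2 (by omega)]
        congr 1; omega
      have hq0 : q ≠ 0 := by
        intro h; have := congrArg Fin.val h; simp [hqdef] at this; omega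
      have hp0 : p ≠ 0 := by
        intro h; have := congrArg Fin.val h; simp [hpdef] at this; omega
      have hqp : q ≠ p := by
        intro h; have := congrArg Fin.val h; simp [hqdef, hpdef] at this; omega
      -- existence of preferences via topTwo
      have ach0 : ∃ R ∈ D, top R Set.univ (i 0) :=
        ⟨P.1 (i p), P.2 (i p), by have := (hP p).1; rwa [hp1] at this⟩
      have achq : ∃ R ∈ D, top R Set.univ (i q) :=
        ⟨P.1 (i q'), P.2 (i q'), by have := (hP q').1; rwa [hq'1] at this⟩
      have achp : ∃ R ∈ D, top R Set.univ (i p) :=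
        ⟨P.1 (i q), P.2 (i q), by have := (hP q).1; rwa [hq1] at this⟩
      obtain ⟨Qa, hQaD, hQa1, hQa2⟩ := htt Set.univ ⟨i 0, Set.mem_univ _⟩ (i 0) (i q)
        (Set.mem_univ _) (Set.mem_univ _) (fun h => hq0 (hi h).symm) ach0 achq
      obtain ⟨Wa, hWaD, hWa1, hWa2⟩ := htt Set.univ ⟨i p, Set.mem_univ _⟩ (i p) (i 0)
        (Set.mem_univ _) (Set.mem_univ _) (fun h => hp0 (hi h)) achp ach0
      -- the deviated profiles
      have hQmem : ∀ j, Function.update P.1 (i q) Qa j ∈ D := by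
        intro j
        rcases eq_or_ne j (i q) with h | h
        · rw [h, Function.update_self]; exact hQaD
        · rw [Function.update_of_ne h]; exact P.2 j
      have hWmem : ∀ j, Function.update P.1 (i q) Wa j ∈ D := by
        intro j
        rcases eq_or_ne j (i q) with h | h
        · rw [h, Function.update_self]; exact hWaD
        · rw [Function.update_of_ne h]; exact P.2 j
      obtain ⟨Qp, hQpdef⟩ : ∃ x : Profile n (fun _ => D),
          x = ⟨Function.update P.1 (i q) Qa, hQmem⟩ := ⟨_, rfl⟩
      obtain ⟨Wp, hWpdef⟩ : ∃ x : Profile n (fun _ => D),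
          x = ⟨Function.update P.1 (i q) Wa, hWmem⟩ := ⟨_, rfl⟩
      have hQ1 : Qp.1 = Function.update P.1 (i q) Qa := by rw [hQpdef]
      have hW1 : Wp.1 = Function.update P.1 (i q) Wa := by rw [hWpdef]
      -- the shorter cycle
      obtain ⟨e, hedef⟩ : ∃ e : Fin (m - 1) → Fin m,
          e = fun t => ⟨t.val, by omega⟩ := ⟨_, rfl⟩
      obtain ⟨jc, hjcdef⟩ : ∃ jc : Fin (m - 1) → Fin n, jc = fun t => i (e t) := ⟨_, rfl⟩
      have heval : ∀ t : Fin (m - 1), (e t).val = t.val := by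
        intro t; rw [hedef]
      have hjceval : ∀ t : Fin (m - 1), jc t = i (e t) := by
        intro t; rw [hjcdef]
      have hjinj : Function.Injective jc := by
        intro a b h
        simp only [hjcdef] at h
        have h2 := congrArg Fin.val (hi h)
        apply Fin.ext
        rw [← heval a, ← heval b]
        exact h2
      haveI : NeZero (m - 1) := ⟨by omega⟩
      have hPQ : ∀ t : Fin (m - 1), top (Qp.1 (jc t)) Set.univ (jc (t + 1)) ∧
          top (Qp.1 (jc t)) (Set.univ \ {jc (t + 1)}) (jc t) := by
        intro t
        have htv : t.val < m - 1 := t.2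
        rcases eq_or_ne t.val (m - 2) with hlast | hlast
        · -- t is the last index of the shorter cycle
          have het : e t = q := by
            apply Fin.ext
            rw [hqdef, heval, hlast]
          have ht1 : (t + 1 : Fin (m - 1)) = 0 := by
            have ht' : t = ⟨m - 1 - 1, Nat.sub_lt (by omega) one_pos⟩ := by
              apply Fin.ext; simp only [hlast]; omega
            rw [ht', fin_mk_last_add_one (by omega)]
          have hj1 : jc (t + 1) = i 0 := by
            rw [hjceval, ht1]; congr 1; apply Fin.ext
            rw [heval]
            simp
          have hjt : jc t = i q := by rw [hjceval, het]
          rw [hjt, hj1, hQ1, Function.update_self]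
          exact ⟨hQa1, hQa2⟩
        · have hlt : t.val + 1 < m - 1 := by omega
          have het : e t ≠ q := by
            intro h
            apply hlast
            have := congrArg Fin.val h
            rw [heval, hqdef] at this
            exact this
          have hup : Qp.1 (jc t) = P.1 (i (e t)) := by
            rw [hjceval, hQ1]
            exact Function.update_of_ne (fun h => het (hi h)) _ _
          have hsucc : jc (t + 1) = i (e t + 1) := by
            rw [hjceval]
            congr 1
            apply Fin.ext
            have h1 : (t + 1 : Fin (m - 1)).val = t.val + 1 := by
              rw [Fin.add_def]; rw [fin_val_one (by omega)]; exact Nat.mod_eq_of_lt hlt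
            have h2 : (e t + 1 : Fin m).val = t.val + 1 := by
              rw [Fin.add_def]; rw [hval1, heval]
              exact Nat.mod_eq_of_lt (by omega)
            rw [h2, heval, h1]
          rw [hup, hsucc, hjceval]
          exact hP (e t)
      have hQall := IH (m - 1) (by omega) inferInstance jc hjinj Qp hPQ
      -- extract the assignment of agent i q at Qp
      have tlv : m - 2 < m - 1 := by omega
      have hjtl : jc ⟨m - 2, tlv⟩ = i q := by
        rw [hjceval]; congr 1; apply Fin.ext; rw [heval, hqdef]
      have htl1 : ((⟨m - 2, tlv⟩ : Fin (m - 1)) + 1) = 0 := by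
        have ht' : (⟨m - 2, tlv⟩ : Fin (m - 1)) = ⟨m - 1 - 1, Nat.sub_lt (by omega) one_pos⟩ := by
          apply Fin.ext; simp only; omega
        rw [ht', fin_mk_last_add_one (by omega)]
      have hjtl1 : jc ((⟨m - 2, tlv⟩ : Fin (m - 1)) + 1) = i 0 := by
        rw [htl1, hjceval]; congr 1; apply Fin.ext
        rw [heval]
        simp
      have h1 : φ Qp (i q) = i 0 := by
        have := hQall ⟨m - 2, tlv⟩
        rwa [hjtl, hjtl1] at this
      -- SP between Wp and Qp
      have hWself : Wp.1 (i q) = Wa := by rw [hW1]; exact Function.update_self _ _ _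
      have hsp1 := hsp Wp Qp (i q) (by
        intro j hj
        rw [hQ1, hW1, Function.update_of_ne hj, Function.update_of_ne hj])
      have hWq : φ Wp (i q) = i 0 ∨ φ Wp (i q) = i p := by
        rcases hsp1 with h | h
        · exact Or.inl (h.trans h1)
        · rw [hWself, h1] at h
          exact Or.inr (two_opts (hD Wa hWaD) hWa1 hWa2 h)
      -- SP between P and Wp
      have hsp2 := hsp P Wp (i q) (by
        intro j hj
        rw [hW1, Function.update_of_ne hj])
      have hWq0 : φ Wp (i q) = i 0 := by
        rcases hWq with h | h
        · exact h
        exfalso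
        rcases hsp2 with h2 | h2
        · rw [hk q, h] at h2
          exact hqp (hi h2)
        · rw [hk q, h] at h2
          have htop := (hP q).1
          rw [hq1] at htop
          have := htop.2 (i q) (Set.mem_univ _) (fun hh => hqp (hi hh))
          exact asym_of (hD _ (P.2 (i q))) h2 this
      -- agent i p keeps its endowment at Wp
      have hWp_top : ∀ t : Fin m, t ≠ q → top (Wp.1 (i t)) Set.univ (i (t + 1)) ∧
          top (Wp.1 (i t)) (Set.univ \ {i (t + 1)}) (i t) := by
        intro t ht
        have : Wp.1 (i t) = P.1 (i t) := by
          rw [hW1]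
          exact Function.update_of_ne (fun h => ht (hi h)) _ _
        rw [this]; exact hP t
      have hWpp : φ Wp (i p) = i p := by
        have hpq : i p ≠ i q := fun h => hqp (hi h).symm
        have htops := hWp_top p (fun h => hqp h.symm)
        rcases hIR Wp (i p) with h | h
        · exact h
        · exfalso
          have := two_opts (hD _ (Wp.2 (i p))) htops.1 htops.2 h
          rw [hp1] at this
          have heq : φ Wp (i p) = φ Wp (i q) := this.trans hWq0.symm
          exact hpq ((hbij Wp).1 heq)
      -- pair efficiency violation at Wp
      apply hpe Wp (i q) (i p)
      constructor
      · rw [hWq0, hWpp, hWself]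
        exact hWa1.2 (i 0) (Set.mem_univ _) (fun h => hp0 (hi h).symm)
      · rw [hWq0, hWpp]
        have : Wp.1 (i p) = P.1 (i p) := by
          rw [hW1]
          exact Function.update_of_ne (fun h => hqp (hi h).symm) _ _
        rw [this]
        have htop := (hP p).1
        rw [hp1] at htop
        exact htop.2 (i p) (Set.mem_univ _) (fun h => hp0 (hi h))
  -- Step 2: so the cycle executes
  push_neg at hknot
  obtain ⟨t0, ht0⟩ := hknot
  have htr0 : φ P (i t0) = i (t0 + 1) := (opts P hP t0).resolve_left ht0
  have step : ∀ t : Fin m, φ P (i t) = i (t + 1) → φ P (i (t + 1)) = i (t + 1 + 1) := by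
    intro t h
    refine (opts P hP (t + 1)).resolve_left ?_
    intro h2
    exact succ_ne t (hi ((hbij P).1 (h2.trans h.symm)))
  have chain : ∀ k : ℕ, φ P (i (t0 + (k : Fin m))) = i (t0 + (k : Fin m) + 1) := by
    intro k
    induction k with
    | zero => simpa using htr0
    | succ k ihk =>
      have := step _ ihk
      have hc : ((k + 1 : ℕ) : Fin m) = (k : Fin m) + 1 := by push_cast; ring
      rw [hc, ← add_assoc]
      exact this
  have hs : t0 + ((s - t0).val : Fin m) = s := by
    rw [Fin.cast_val_eq_self]
    exact add_sub_cancel t0 s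
  have := chain (s - t0).val
  rwa [hs] at this


/-- if agents i_1, ..., i_m form a trading cycle and each i_s reports
the preference P'_{i_s} ranking o_{i_{s+1}} first and o_{i_s} second, then any
individually rational, pair efficient, strategyproof mechanism on a top-two domain
executes the cycle; in particular not every agent in the cycle keeps their endowment. -/
theorem stmt13 {n m : ℕ} [NeZero m] (D : Set (PrefRel n))
    (hD : ∀ P ∈ D, IsStrictTotalOrder (Fin n) P) (htt : topTwo D)
    (φ : Profile n (fun _ => D) → Fin n → Fin n)
    (hbij : ∀ P, Function.Bijective (φ P))
    (hIR : IR φ) (hpe : PairEff φ) (hsp : SP φ)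
    (i : Fin m → Fin n) (hi : Function.Injective i)
    (P : Profile n (fun _ => D))
    (hP : ∀ s : Fin m, top (P.1 (i s)) Set.univ (i (s + 1)) ∧
      top (P.1 (i s)) (Set.univ \ {i (s + 1)}) (i s)) :
    (∀ s : Fin m, φ P (i s) = i (s + 1)) ∧ ¬ (∀ s : Fin m, φ P (i s) = i s) := by
  have hmain := cycle_lemma D hD htt φ hbij hIR hpe hsp m ‹NeZero m› i hi P hP
  refine ⟨hmain, ?_⟩
  intro hall
  have hne := (hP 0).2.1.2
  apply hne
  have : i 0 = i (0 + 1) := (hall 0).symm.trans (hmain 0)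
  exact this.symm ▸ rfl
end

section
/- There exists a domain profile violating domain-wise sufficiency of the top-two condition: for n = 3 with heterogeneous domains D_1 = {o2≻o1≻o3}, D_2 = {o3≻o2≻o1}, D_3 = {o1≻o3≻o2} (each a singleton, hence each trivially satisfying the top-two condition), the mechanism that always returns the endowment allocation (agent i gets o_i) is individually rational, pair efficient, and strategyproof, yet differs from TTC at the unique preference profile. -/
/-- The preference encoded by a rank vector: lower rank = more preferred. -/
def prefOf {n : ℕ} (rk : Fin n → ℕ) : PrefRel n := fun a b => rk a < rk b

/-- Heterogeneous domains: D_1 = {o2 o1 o3}, D_2 = {o3 o2 o1}, D_3 = {o1 o3 o2},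
with objects o1 = 0, o2 = 1, o3 = 2. -/
def Ds14 : Fin 3 → Set (PrefRel 3) := ![{prefOf ![1,0,2]}, {prefOf ![2,1,0]}, {prefOf ![0,2,1]}]

/-- The endowment mechanism: every agent keeps their own object. -/
def endowMech : Profile 3 Ds14 → Fin 3 → Fin 3 := fun _ i => i

theorem stmt14 :
    (∀ i, topTwo (Ds14 i)) ∧
    (∀ P, Function.Bijective (endowMech P)) ∧
    IR endowMech ∧ PairEff endowMech ∧ SP endowMech ∧
    ∃ P : Profile 3 Ds14, ¬ isTTC P.1 (endowMech P) := by
  refine ⟨?_, ?_, ?_, ?_, ?_, ?_⟩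
  · -- topTwo for singleton domains
    intro i O' hO' a b ha hb hab ⟨P1, hP1, ht1⟩ ⟨P2, hP2, ht2⟩
    exfalso
    have hQ : P1 = P2 := by
      fin_cases i <;> simp [Ds14] at hP1 hP2 <;> rw [hP1, hP2]
    have h1 : P1 a b := ht1.2 b hb (Ne.symm hab)
    have h2 : P1 b a := by rw [hQ]; exact ht2.2 a ha hab
    fin_cases i <;> simp [Ds14] at hP1 <;> subst hP1 <;>
      simp [prefOf] at h1 h2 <;> omega
  · intro P
    exact Function.bijective_id
  · intro P i
    exact Or.inl rfl
  · -- PairEff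
    intro P i j ⟨h1, h2⟩
    have e1 := P.2 i
    have e2 := P.2 j
    simp only [endowMech] at h1 h2
    fin_cases i <;> fin_cases j <;>
      simp [Ds14] at e1 e2 <;>
      simp at h1 h2 <;>
      rw [e1] at h1 <;> rw [e2] at h2 <;>
      simp [prefOf] at h1 h2
  · intro P Q i _
    exact Or.inl rfl
  · -- not TTC
    refine ⟨⟨![prefOf ![1,0,2], prefOf ![2,1,0], prefOf ![0,2,1]], ?_⟩, ?_⟩
    · intro i; fin_cases i <;> simp [Ds14]
    · rintro ⟨-, r, h⟩
      have h0 := (h 0).2 1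
      have h1 := (h 1).2 2
      have h2 := (h 2).2 0
      simp [endowMech, prefOf] at h0 h1 h2
      omega
end
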